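/- arXiv:alg-geom/9606009 — 9 statements merged into one kernel-verified Lean document; each statement's English description precedes it below -/
import Mathlib

section
/- The following conditions are equivalent: (1) the canonical map V → lim_{A ~ V⁺} V/A is bijective (V is complete); (2) the canonical map V⁺ → lim_{A ~ V⁺} V⁺/(A ∩ V⁺) is bijective (V⁺ is complete); (3) for every subspace B commensurable with V⁺, the canonical map B → lim_{A ~ V⁺} B/(A ∩ B) is bijective (every subspace commensurable with V⁺ is complete). -/
open Submodule

/-- Two subspaces `A`, `B` of a `k`-vector space `V` are *commensurable* if the quotient
`(A + B)/(A ∩ B)` is a finite-dimensional `k`-vector space. -/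
def IsCommensurable {k V : Type*} [Field k] [AddCommGroup V] [Module k V]
    (A B : Submodule k V) : Prop :=
  FiniteDimensional k (↥(A ⊔ B) ⧸ Submodule.comap (A ⊔ B).subtype (A ⊓ B))

/-- A subspace `W ⊆ V` is *complete* (w.r.t. the `V⁺`-topology) if the canonical map from `W`
to the inverse limit `lim_{A ~ V⁺} W/(W ∩ A)` — realized as the subspace of the product
`Π_{A ~ V⁺} W/(W ∩ A)` of families compatible under the natural projections — is bijective. -/
def IsCompleteSubspace {k V : Type*} [Field k] [AddCommGroup V] [Module k V]
    (Vplus W : Submodule k V) : Prop :=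
  Function.Bijective (fun w : W =>
    (⟨fun A : {A : Submodule k V // IsCommensurable A Vplus} =>
        Submodule.Quotient.mk (p := comap W.subtype A.1) w,
      fun A A' h => by simp [Submodule.mapQ_apply]⟩ :
      {x : ∀ A : {A : Submodule k V // IsCommensurable A Vplus}, ↥W ⧸ comap W.subtype A.1 //
        ∀ (A A' : {A : Submodule k V // IsCommensurable A Vplus}) (h : A.1 ≤ A'.1),
          Submodule.mapQ (comap W.subtype A.1) (comap W.subtype A'.1) LinearMap.id
            (fun _ hw => h hw) (x A) = x A'}))

section Helpers
variable {k V : Type*} [Field k] [AddCommGroup V] [Module k V] (Vplus : Submodule k V)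

lemma comm_refl : IsCommensurable Vplus Vplus := by
  have htop : comap (Vplus ⊔ Vplus).subtype (Vplus ⊓ Vplus) = ⊤ := by
    ext x
    have hx : (x : V) ∈ Vplus := by simpa using x.2
    simp [hx]
  unfold IsCommensurable
  haveI := Submodule.Quotient.subsingleton_iff.mpr htop
  exact Module.finite_def.mpr
    (by rw [Subsingleton.elim (⊤ : Submodule k _) ⊥]; exact Submodule.fg_bot)

lemma comm_inf {A : Submodule k V} (h : IsCommensurable A Vplus) :
    IsCommensurable (A ⊓ Vplus) Vplus := by
  unfold IsCommensurable at h ⊢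
  have hle : (A ⊓ Vplus) ⊔ Vplus ≤ A ⊔ Vplus :=
    sup_le (inf_le_left.trans le_sup_left) le_sup_right
  have hpq : comap ((A ⊓ Vplus) ⊔ Vplus).subtype ((A ⊓ Vplus) ⊓ Vplus) ≤
      comap (Submodule.inclusion hle)
        (comap (A ⊔ Vplus).subtype (A ⊓ Vplus)) := by
    intro x hx
    simp only [Submodule.mem_comap] at hx ⊢
    exact hx.1
  set g := Submodule.mapQ _ _ (Submodule.inclusion hle) hpq with hg_def
  have hg : Function.Injective g := by
    rw [← LinearMap.ker_eq_bot, eq_bot_iff]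
    intro x hx
    obtain ⟨y, rfl⟩ := Submodule.Quotient.mk_surjective _ x
    rw [LinearMap.mem_ker, hg_def, Submodule.mapQ_apply, Submodule.Quotient.mk_eq_zero] at hx
    simp only [Submodule.mem_comap] at hx
    simp only [Submodule.mem_bot, Submodule.Quotient.mk_eq_zero, Submodule.mem_comap]
    have : (y : V) ∈ A ⊓ Vplus := by simpa using hx
    exact ⟨this, this.2⟩
  exact letI := h; FiniteDimensional.of_injective g hg

end Helpers

lemma key1 {k V : Type*} [Field k] [AddCommGroup V] [Module k V] (Vplus : Submodule k V)
    (h : IsCompleteSubspace Vplus (⊤ : Submodule k V)) :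
    ∀ B : Submodule k V, IsCommensurable B Vplus → IsCompleteSubspace Vplus B := by
  intro B hB
  unfold IsCompleteSubspace at h ⊢
  obtain ⟨hinj, hsurj⟩ := h
  constructor
  · -- injectivity
    intro b b' hbb'
    have hcomp : ∀ A : {A : Submodule k V // IsCommensurable A Vplus},
        ((b : V) - b') ∈ A.1 := by
      intro A
      have h1 := congrFun (congrArg Subtype.val hbb') A
      have h2 := (Submodule.Quotient.eq _).mp h1
      simpa using h2
    have key : (⟨(b : V) - b', trivial⟩ : (⊤ : Submodule k V)) = 0 := by
      apply hinj
      refine Subtype.ext (funext fun A => ?_)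
      show Submodule.Quotient.mk _ = Submodule.Quotient.mk _
      refine (Submodule.Quotient.eq _).mpr ?_
      simpa using hcomp A
    have : (b : V) - b' = 0 := congrArg Subtype.val key
    exact Subtype.ext (sub_eq_zero.mp this)
  · -- surjectivity
    intro x
    choose u hu using fun A : {A : Submodule k V // IsCommensurable A Vplus} =>
      Submodule.Quotient.mk_surjective (comap B.subtype A.1) (x.1 A)
    have hucomp : ∀ (A A' : {A : Submodule k V // IsCommensurable A Vplus}),
        A.1 ≤ A'.1 → ((u A : V) - u A') ∈ A'.1 := by
      intro A A' hle
      have hx := x.2 A A' hle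
      rw [← hu A, ← hu A', Submodule.mapQ_apply] at hx
      have := (Submodule.Quotient.eq _).mp hx
      simpa using this
    obtain ⟨v, hv⟩ := hsurj ⟨fun A => Submodule.Quotient.mk
        (p := comap (⊤ : Submodule k V).subtype A.1) ⟨(u A : V), trivial⟩,
      by
        intro A A' hle
        rw [Submodule.mapQ_apply]
        refine (Submodule.Quotient.eq _).mpr ?_
        simpa using hucomp A A' hle⟩
    have hv' : ∀ A : {A : Submodule k V // IsCommensurable A Vplus},
        ((v : V) - u A) ∈ A.1 := by
      intro A
      have h1 := congrFun (congrArg Subtype.val hv) A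
      have h2 := (Submodule.Quotient.eq _).mp h1
      simpa using h2
    have hvB : (v : V) ∈ B := by
      have := hv' ⟨B, hB⟩
      have h2 := (u ⟨B, hB⟩).2
      simpa using B.add_mem this h2
    refine ⟨⟨(v : V), hvB⟩, ?_⟩
    refine Subtype.ext (funext fun A => ?_)
    show Submodule.Quotient.mk _ = x.1 A
    rw [← hu A]
    refine (Submodule.Quotient.eq _).mpr ?_
    simpa using hv' A

lemma key2 {k V : Type*} [Field k] [AddCommGroup V] [Module k V] (Vplus : Submodule k V)
    (h : IsCompleteSubspace Vplus Vplus) :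
    IsCompleteSubspace Vplus (⊤ : Submodule k V) := by
  unfold IsCompleteSubspace at h ⊢
  obtain ⟨hinj, hsurj⟩ := h
  have iV : {A : Submodule k V // IsCommensurable A Vplus} := ⟨Vplus, comm_refl Vplus⟩
  constructor
  · -- injectivity
    intro v v' hvv'
    have hcomp : ∀ A : {A : Submodule k V // IsCommensurable A Vplus},
        ((v : V) - v') ∈ A.1 := by
      intro A
      have h1 := congrFun (congrArg Subtype.val hvv') A
      have h2 := (Submodule.Quotient.eq _).mp h1
      simpa using h2
    have hd : ((v : V) - v') ∈ Vplus := hcomp ⟨Vplus, comm_refl Vplus⟩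
    have key : (⟨(v : V) - v', hd⟩ : Vplus) = 0 := by
      apply hinj
      refine Subtype.ext (funext fun A => ?_)
      show Submodule.Quotient.mk _ = Submodule.Quotient.mk _
      refine (Submodule.Quotient.eq _).mpr ?_
      simpa using hcomp A
    have : (v : V) - v' = 0 := congrArg Subtype.val key
    exact Subtype.ext (sub_eq_zero.mp this)
  · -- surjectivity
    intro x
    choose u hu using fun A : {A : Submodule k V // IsCommensurable A Vplus} =>
      Submodule.Quotient.mk_surjective (comap (⊤ : Submodule k V).subtype A.1) (x.1 A)
    have hucomp : ∀ (A A' : {A : Submodule k V // IsCommensurable A Vplus}),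
        A.1 ≤ A'.1 → ((u A : V) - u A') ∈ A'.1 := by
      intro A A' hle
      have hx := x.2 A A' hle
      rw [← hu A, ← hu A', Submodule.mapQ_apply] at hx
      have := (Submodule.Quotient.eq _).mp hx
      simpa using this
    set iV : {A : Submodule k V // IsCommensurable A Vplus} := ⟨Vplus, comm_refl Vplus⟩
      with hiV
    -- for each index A, the index A ⊓ Vplus
    set F : {A : Submodule k V // IsCommensurable A Vplus} →
        {A : Submodule k V // IsCommensurable A Vplus} :=
      fun A => ⟨A.1 ⊓ Vplus, comm_inf Vplus A.2⟩ with hF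
    have hmem : ∀ A : {A : Submodule k V // IsCommensurable A Vplus},
        ((u (F A) : V) - u iV) ∈ Vplus := by
      intro A
      have := hucomp (F A) iV (by rw [hF, hiV]; exact inf_le_right)
      simpa [hiV] using this
    obtain ⟨w, hw⟩ := hsurj ⟨fun A => Submodule.Quotient.mk
        (p := comap Vplus.subtype A.1) ⟨(u (F A) : V) - u iV, hmem A⟩,
      by
        intro A A' hle
        rw [Submodule.mapQ_apply]
        refine (Submodule.Quotient.eq _).mpr ?_
        have h1 : ((u (F A) : V) - u (F A')) ∈ A'.1 ⊓ Vplus := by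
          have := hucomp (F A) (F A') (inf_le_inf_right Vplus hle)
          simpa [hF] using this
        simp only [Submodule.mem_comap, Submodule.subtype_apply, LinearMap.id_coe, id_eq,
          AddSubgroupClass.coe_sub]
        have heq : (((u (F A) : V) - u iV) - ((u (F A') : V) - u iV))
            = (u (F A) : V) - u (F A') := by abel
        rw [heq]
        exact h1.1⟩
    have hw' : ∀ A : {A : Submodule k V // IsCommensurable A Vplus},
        ((w : V) - ((u (F A) : V) - u iV)) ∈ A.1 := by
      intro A
      have h1 := congrFun (congrArg Subtype.val hw) A
      have h2 := (Submodule.Quotient.eq _).mp h1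
      simpa using h2
    refine ⟨⟨(w : V) + (u iV : V), trivial⟩, ?_⟩
    refine Subtype.ext (funext fun A => ?_)
    show Submodule.Quotient.mk _ = x.1 A
    rw [← hu A]
    refine (Submodule.Quotient.eq _).mpr ?_
    have h1 : ((u (F A) : V) - u A) ∈ A.1 := by
      have := hucomp (F A) A (by rw [hF]; exact inf_le_left)
      simpa using this
    have h2 := hw' A
    have heq : ((⟨(w : V) + (u iV : V), trivial⟩ : (⊤ : Submodule k V)) - u A : V) =
        ((w : V) - ((u (F A) : V) - u iV)) + ((u (F A) : V) - u A) := by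
      simp only [AddSubgroupClass.coe_sub]
      abel_nf
    simp only [Submodule.mem_comap, Submodule.subtype_apply, AddSubgroupClass.coe_sub]
    rw [heq]
    exact A.1.add_mem h2 h1

/-- The following are equivalent: (1) `V` is complete; (2) `V⁺` is complete; (3) every
subspace commensurable with `V⁺` is complete. -/
theorem isCompleteSubspace_tfae {k V : Type*} [Field k] [AddCommGroup V] [Module k V]
    (Vplus : Submodule k V) :
    (IsCompleteSubspace Vplus (⊤ : Submodule k V) ↔ IsCompleteSubspace Vplus Vplus) ∧
    (IsCompleteSubspace Vplus (⊤ : Submodule k V) ↔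
      ∀ B : Submodule k V, IsCommensurable B Vplus → IsCompleteSubspace Vplus B) := by
  refine ⟨⟨fun h => key1 Vplus h Vplus (comm_refl Vplus), key2 Vplus⟩,
    ⟨key1 Vplus, fun h => key2 Vplus (h Vplus (comm_refl Vplus))⟩⟩
end

section
/- For every subspace B of V commensurable with V⁺, the canonical map V/B → lim_{A ~ V⁺} V/(A + B) is bijective; that is, the quotient V/B is already complete (and discrete) in the topology induced from the V⁺-topology. -/
open Submodule

section Aux

variable {k V : Type*} [Field k] [AddCommGroup V] [Module k V]

lemma fd_quot_iff_fd_map (p q : Submodule k V) :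
    FiniteDimensional k (↥p ⧸ Submodule.comap p.subtype q) ↔
      FiniteDimensional k ↥(p.map q.mkQ) := by
  have e := (q.mkQ.comp p.subtype).quotKerEquivRange
  rw [LinearMap.ker_comp, Submodule.ker_mkQ, LinearMap.range_comp,
    Submodule.range_subtype] at e
  exact ⟨fun h => Module.Finite.equiv e, fun h => Module.Finite.equiv e.symm⟩

lemma isCommensurable_sup {A B W : Submodule k V}
    (hA : IsCommensurable A W) (hB : IsCommensurable B W) :
    IsCommensurable (A ⊔ B) W := by
  unfold IsCommensurable at hA hB ⊢
  rw [fd_quot_iff_fd_map] at hA hB ⊢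
  set D : Submodule k V := (A ⊓ W) ⊔ (B ⊓ W) with hD
  have hDle : D ≤ (A ⊔ B) ⊓ W :=
    sup_le (inf_le_inf_right W le_sup_left) (inf_le_inf_right W le_sup_right)
  have hfac : ((A ⊔ B) ⊓ W).mkQ =
      (Submodule.mapQ D ((A ⊔ B) ⊓ W) LinearMap.id hDle).comp D.mkQ :=
    ((Submodule.mapQ_mkQ _ _ _).trans (LinearMap.comp_id _)).symm
  have hfacA : D.mkQ = (Submodule.mapQ (A ⊓ W) D LinearMap.id le_sup_left).comp (A ⊓ W).mkQ :=
    ((Submodule.mapQ_mkQ _ _ _).trans (LinearMap.comp_id _)).symm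
  have hfacB : D.mkQ = (Submodule.mapQ (B ⊓ W) D LinearMap.id le_sup_right).comp (B ⊓ W).mkQ :=
    ((Submodule.mapQ_mkQ _ _ _).trans (LinearMap.comp_id _)).symm
  have hA' : FiniteDimensional k ↥((A ⊔ W).map D.mkQ) := by
    rw [hfacA, Submodule.map_comp]
    infer_instance
  have hB' : FiniteDimensional k ↥((B ⊔ W).map D.mkQ) := by
    rw [hfacB, Submodule.map_comp]
    infer_instance
  have hle2 : (A ⊔ B) ⊔ W ≤ (A ⊔ W) ⊔ (B ⊔ W) := by
    rw [sup_sup_sup_comm, sup_idem]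
  have hsub : ((A ⊔ B) ⊔ W).map D.mkQ ≤ (A ⊔ W).map D.mkQ ⊔ (B ⊔ W).map D.mkQ := by
    rw [← Submodule.map_sup]
    exact Submodule.map_mono hle2
  have hfd : FiniteDimensional k ↥(((A ⊔ B) ⊔ W).map D.mkQ) :=
    Submodule.finiteDimensional_of_le hsub
  rw [hfac, Submodule.map_comp]
  infer_instance

end Aux

/-- For every subspace `B` commensurable with `V⁺`, the canonical map
`V/B → lim_{A ~ V⁺} V/(A + B)` — the inverse limit being realized as the subspace of the
product `Π_{A ~ V⁺} V/(A + B)` of families compatible under the natural projections — is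
bijective: the quotient `V/B` is already complete. -/
theorem bijective_quotient_to_invLim {k V : Type*} [Field k] [AddCommGroup V] [Module k V]
    (Vplus B : Submodule k V) (hB : IsCommensurable B Vplus) :
    Function.Bijective (fun v : V ⧸ B =>
      (⟨fun A : {A : Submodule k V // IsCommensurable A Vplus} =>
          Submodule.mapQ B (A.1 ⊔ B) LinearMap.id
            (fun x hx => (le_sup_right : B ≤ A.1 ⊔ B) hx) v,
        by
          obtain ⟨w, rfl⟩ := Submodule.Quotient.mk_surjective B v
          intro A A' h
          simp [Submodule.mapQ_apply]⟩ :
        {x : ∀ A : {A : Submodule k V // IsCommensurable A Vplus}, V ⧸ (A.1 ⊔ B) //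
          ∀ (A A' : {A : Submodule k V // IsCommensurable A Vplus}) (h : A.1 ≤ A'.1),
            Submodule.mapQ (A.1 ⊔ B) (A'.1 ⊔ B) LinearMap.id
              (fun x hx => sup_le_sup_right h B hx) (x A) = x A'})) := by
  constructor
  · intro v w h
    have h0 := congrFun (congrArg Subtype.val h) ⟨B, hB⟩
    obtain ⟨v', rfl⟩ := Submodule.Quotient.mk_surjective B v
    obtain ⟨w', rfl⟩ := Submodule.Quotient.mk_surjective B w
    simp only [Submodule.mapQ_apply, LinearMap.id_coe, id_eq] at h0
    rw [Submodule.Quotient.eq] at h0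
    rw [Submodule.Quotient.eq]
    simpa using h0
  · rintro ⟨x, hx⟩
    obtain ⟨w, hw⟩ := Submodule.Quotient.mk_surjective _ (x ⟨B, hB⟩)
    refine ⟨Submodule.Quotient.mk w, Subtype.ext (funext fun A => ?_)⟩
    have hA' : IsCommensurable (A.1 ⊔ B) Vplus := isCommensurable_sup A.2 hB
    obtain ⟨u, hu⟩ := Submodule.Quotient.mk_surjective _ (x A)
    have h1 := hx A ⟨A.1 ⊔ B, hA'⟩ le_sup_left
    have h2 := hx ⟨B, hB⟩ ⟨A.1 ⊔ B, hA'⟩ le_sup_right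
    rw [← hu] at h1
    rw [← hw] at h2
    simp only [Submodule.mapQ_apply, LinearMap.id_coe, id_eq] at h1 h2
    rw [← h2] at h1
    rw [Submodule.Quotient.eq] at h1
    show Submodule.mapQ B (A.1 ⊔ B) LinearMap.id _ (Submodule.Quotient.mk w) = x A
    rw [← hu, Submodule.mapQ_apply, Submodule.Quotient.eq]
    have hmem : u - w ∈ A.1 ⊔ B := by
      have heq : (A.1 ⊔ B) ⊔ B = A.1 ⊔ B := by rw [sup_assoc, sup_idem]
      rwa [heq] at h1
    simpa using neg_mem hmem
end

section
/- Let A and B be subspaces of a k-vector space V. There exists a subspace L ⊆ V with L ⊕ A = V and L ⊕ B = V (i.e. L ∩ A = 0, L + A = V, L ∩ B = 0, L + B = V) if and only if there exists a k-linear isomorphism B/(A ∩ B) ≅ A/(A ∩ B). -/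
open Submodule

/-- For subspaces `A`, `B` of a `k`-vector space `V`, there exists a subspace `L` which is
simultaneously a complement of `A` and of `B` (`L ∩ A = 0`, `L + A = V`, `L ∩ B = 0`,
`L + B = V`) if and only if there is a `k`-linear isomorphism `B/(A ∩ B) ≅ A/(A ∩ B)`. -/
theorem exists_common_complement_iff {k V : Type*} [Field k] [AddCommGroup V] [Module k V]
    (A B : Submodule k V) :
    (∃ L : Submodule k V, L ⊓ A = ⊥ ∧ L ⊔ A = ⊤ ∧ L ⊓ B = ⊥ ∧ L ⊔ B = ⊤) ↔
    Nonempty ((↥B ⧸ Submodule.comap B.subtype (A ⊓ B)) ≃ₗ[k]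
      (↥A ⧸ Submodule.comap A.subtype (A ⊓ B))) := by
  set CA := Submodule.comap A.subtype (A ⊓ B) with hCAdef
  set CB := Submodule.comap B.subtype (A ⊓ B) with hCBdef
  constructor
  · rintro ⟨L, hLA, hLAs, hLB, hLBs⟩
    have hAL : IsCompl A L :=
      ⟨disjoint_iff.2 (by rw [inf_comm]; exact hLA), codisjoint_iff.2 (by rw [sup_comm]; exact hLAs)⟩
    have hBL : IsCompl B L :=
      ⟨disjoint_iff.2 (by rw [inf_comm]; exact hLB), codisjoint_iff.2 (by rw [sup_comm]; exact hLBs)⟩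
    set π := A.projectionOnto L hAL with hπ
    set ρ := B.projectionOnto L hBL with hρ
    set f : ↥B →ₗ[k] ↥A := π.comp B.subtype with hf
    have hfval : ∀ b : ↥B, f b = π (b : V) := fun b => rfl
    have hinj : Function.Injective f := by
      intro b₁ b₂ h
      have : ((b₁ : V) - b₂) ∈ L := by
        rw [← Submodule.linearProjOfIsCompl_apply_eq_zero_iff hAL]
        simp only [map_sub]
        rw [← hfval, ← hfval, h, sub_self]
      have hmem : ((b₁ : V) - b₂) ∈ L ⊓ B := ⟨this, sub_mem b₁.2 b₂.2⟩
      rw [hLB] at hmem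
      exact Subtype.ext (sub_eq_zero.1 hmem)
    have hsurj : Function.Surjective f := by
      intro a
      refine ⟨ρ (a : V), ?_⟩
      have hsum : ((ρ (a : V) : V) + (L.linearProjOfIsCompl B hBL.symm (a : V) : V) = a) :=
        Submodule.projection_add_projection_eq_self hBL (a : V)
      have hl := eq_sub_of_add_eq' hsum
      have key : ((a : V) - (ρ (a : V) : V)) ∈ L :=
        hl ▸ (L.linearProjOfIsCompl B hBL.symm (a : V)).2
      have h1 : π ((a : V) - (ρ (a : V) : V)) = 0 :=
        Submodule.projectionOnto_apply_of_mem_right hAL key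
      have h2 : π (a : V) = a := Submodule.linearProjOfIsCompl_apply_left hAL a
      rw [map_sub] at h1
      have h3 : π (a : V) = π ((ρ (a : V) : V)) := sub_eq_zero.1 h1
      rw [hfval, ← h3, h2]
    set e : ↥B ≃ₗ[k] ↥A := LinearEquiv.ofBijective f ⟨hinj, hsurj⟩ with he
    have hmapval : ∀ b : ↥B, (b : V) ∈ A → ((e b : ↥A) : V) = (b : V) := by
      intro b hb
      have : π (b : V) = ⟨(b : V), hb⟩ :=
        Submodule.linearProjOfIsCompl_apply_left hAL ⟨(b : V), hb⟩
      show ((f b : ↥A) : V) = (b : V)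
      rw [hfval, this]
    have hmap : CB.map (e : ↥B →ₗ[k] ↥A) = CA := by
      apply le_antisymm
      · rintro y ⟨b, hb, rfl⟩
        have hbA : (b : V) ∈ A := hb.1
        show ((e b : ↥A) : V) ∈ A ⊓ B
        rw [hmapval b hbA]
        exact ⟨hbA, b.2⟩
      · intro y hy
        have hyAB : (y : V) ∈ A ⊓ B := hy
        set b : ↥B := ⟨(y : V), hyAB.2⟩ with hbdef
        refine ⟨b, ?_, ?_⟩
        · show (b : V) ∈ A ⊓ B; exact hyAB
        · apply Subtype.ext
          exact hmapval b hyAB.1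
    exact ⟨Submodule.Quotient.equiv CB CA e hmap⟩
  · rintro ⟨e⟩
    obtain ⟨A'', hA''⟩ := CA.exists_isCompl
    obtain ⟨B'', hB''⟩ := CB.exists_isCompl
    obtain ⟨M, hM⟩ := (A ⊔ B).exists_isCompl
    set qA := Submodule.quotientEquivOfIsCompl CA A'' hA'' with hqA
    set qB := Submodule.quotientEquivOfIsCompl CB B'' hB'' with hqB
    set g : ↥B'' ≃ₗ[k] ↥A'' := qB.symm.trans (e.trans qA) with hg
    set φ : ↥B'' →ₗ[k] V :=
      (B.subtype.comp B''.subtype) + ((A.subtype.comp A''.subtype).comp g.toLinearMap) with hφ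
    have hφval : ∀ x : ↥B'', φ x = ((x : ↥B) : V) + (((g x : ↥A) : V)) := fun x => rfl
    set L₀ := LinearMap.range φ with hL₀
    have hL₀le : L₀ ≤ A ⊔ B := by
      rintro v ⟨x, rfl⟩
      rw [hφval]
      exact add_mem (Submodule.mem_sup_right ((x : ↥B)).2)
        (Submodule.mem_sup_left ((g x : ↥A)).2)
    have hL₀A : L₀ ⊓ A = ⊥ := by
      rw [eq_bot_iff]
      rintro v ⟨⟨x, rfl⟩, hvA⟩
      have hxB : ((x : ↥B) : V) ∈ B := ((x : ↥B)).2
      have hxA : ((x : ↥B) : V) ∈ A := by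
        have : ((x : ↥B) : V) = φ x - ((g x : ↥A) : V) := by rw [hφval]; abel
        rw [this]
        exact sub_mem hvA ((g x : ↥A)).2
      have hCB : (x : ↥B) ∈ CB := ⟨hxA, hxB⟩
      have hmem : (x : ↥B) ∈ CB ⊓ B'' := ⟨hCB, x.2⟩
      have hx0 : (x : ↥B) = 0 := by
        have h := hB''.inf_eq_bot ▸ hmem
        simpa using h
      have hx0' : x = 0 := Subtype.ext hx0
      simp [hx0', hφval]
    have hL₀B : L₀ ⊓ B = ⊥ := by
      rw [eq_bot_iff]
      rintro v ⟨⟨x, rfl⟩, hvB⟩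
      have hgA : ((g x : ↥A) : V) ∈ A := ((g x : ↥A)).2
      have hgB : ((g x : ↥A) : V) ∈ B := by
        have : ((g x : ↥A) : V) = φ x - ((x : ↥B) : V) := by rw [hφval]; abel
        rw [this]
        exact sub_mem hvB ((x : ↥B)).2
      have hCA : (g x : ↥A) ∈ CA := ⟨hgA, hgB⟩
      have hmem : (g x : ↥A) ∈ CA ⊓ A'' := ⟨hCA, (g x).2⟩
      have hgx0 : (g x : ↥A) = 0 := by
        have h := hA''.inf_eq_bot ▸ hmem
        simpa using h
      have hx0 : x = 0 := by
        apply g.injective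
        rw [map_zero]
        exact Subtype.ext hgx0
      simp [hx0, hφval]
    have hBle : B ≤ L₀ ⊔ A := by
      intro b hb
      set bb : ↥B := ⟨b, hb⟩ with hbb
      set x : ↥B'' := B''.linearProjOfIsCompl CB hB''.symm bb with hx
      have hsum : ((CB.linearProjOfIsCompl B'' hB'' bb : ↥B) + (B''.linearProjOfIsCompl CB hB''.symm bb : ↥B) = bb) :=
        Submodule.projection_add_projection_eq_self hB'' bb
      have hl := eq_sub_of_add_eq hsum
      have hc : bb - (x : ↥B) ∈ CB := by
        rw [← hl]; exact (CB.linearProjOfIsCompl B'' hB'' bb).2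
      have hcA : (b : V) - ((x : ↥B) : V) ∈ A := hc.1
      have hkey : b = ((b : V) - ((x : ↥B) : V)) + (φ x - ((g x : ↥A) : V)) := by
        rw [hφval]; abel
      rw [hkey]
      exact add_mem (Submodule.mem_sup_right hcA)
        (sub_mem (Submodule.mem_sup_left ⟨x, rfl⟩) (Submodule.mem_sup_right ((g x : ↥A)).2))
    have hAle : A ≤ L₀ ⊔ B := by
      intro a ha
      set aa : ↥A := ⟨a, ha⟩ with haa
      set y : ↥A'' := A''.linearProjOfIsCompl CA hA''.symm aa with hy
      set x : ↥B'' := g.symm y with hxdef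
      have hgx : g x = y := g.apply_symm_apply y
      have hsum : ((CA.linearProjOfIsCompl A'' hA'' aa : ↥A) + (A''.linearProjOfIsCompl CA hA''.symm aa : ↥A) = aa) :=
        Submodule.projection_add_projection_eq_self hA'' aa
      have hl := eq_sub_of_add_eq hsum
      have hc : aa - (y : ↥A) ∈ CA := by
        rw [← hl]; exact (CA.linearProjOfIsCompl A'' hA'' aa).2
      have hcB : (a : V) - ((y : ↥A) : V) ∈ B := hc.2
      have hkey : a = ((a : V) - ((y : ↥A) : V)) + (φ x - ((x : ↥B) : V)) := by
        rw [hφval, hgx]; abel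
      rw [hkey]
      exact add_mem (Submodule.mem_sup_right hcB)
        (sub_mem (Submodule.mem_sup_left ⟨x, rfl⟩) (Submodule.mem_sup_right ((x : ↥B)).2))
    refine ⟨L₀ ⊔ M, ?_, ?_, ?_, ?_⟩
    · rw [eq_bot_iff]
      rintro v ⟨hvL, hvA⟩
      obtain ⟨l, hl, m, hm, rfl⟩ := Submodule.mem_sup.1 hvL
      have hmAB : m ∈ A ⊔ B := by
        have : m = (l + m) - l := by abel
        rw [this]
        exact sub_mem (Submodule.mem_sup_left hvA) (hL₀le hl)
      have hm0 : m = 0 := by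
        have : m ∈ (A ⊔ B) ⊓ M := ⟨hmAB, hm⟩
        have := hM.inf_eq_bot ▸ this
        simpa using this
      have : l + m ∈ L₀ ⊓ A := ⟨by rw [hm0, add_zero]; exact hl, hvA⟩
      rw [hL₀A] at this
      simpa using this
    · rw [eq_top_iff]
      intro v _
      have : (A ⊔ B) ⊔ M = ⊤ := hM.sup_eq_top
      have hv : v ∈ (A ⊔ B) ⊔ M := this ▸ Submodule.mem_top
      have hsub : (A ⊔ B) ⊔ M ≤ (L₀ ⊔ M) ⊔ A := by
        apply sup_le
        · apply sup_le
          · exact le_trans (le_sup_right) (le_refl _)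
          · exact le_trans hBle (sup_le (le_trans le_sup_left le_sup_left) le_sup_right)
        · exact le_trans le_sup_right le_sup_left
      exact hsub hv
    · rw [eq_bot_iff]
      rintro v ⟨hvL, hvB⟩
      obtain ⟨l, hl, m, hm, rfl⟩ := Submodule.mem_sup.1 hvL
      have hmAB : m ∈ A ⊔ B := by
        have : m = (l + m) - l := by abel
        rw [this]
        exact sub_mem (Submodule.mem_sup_right hvB) (hL₀le hl)
      have hm0 : m = 0 := by
        have : m ∈ (A ⊔ B) ⊓ M := ⟨hmAB, hm⟩
        have := hM.inf_eq_bot ▸ this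
        simpa using this
      have : l + m ∈ L₀ ⊓ B := ⟨by rw [hm0, add_zero]; exact hl, hvB⟩
      rw [hL₀B] at this
      simpa using this
    · rw [eq_top_iff]
      intro v _
      have : (A ⊔ B) ⊔ M = ⊤ := hM.sup_eq_top
      have hv : v ∈ (A ⊔ B) ⊔ M := this ▸ Submodule.mem_top
      have hsub : (A ⊔ B) ⊔ M ≤ (L₀ ⊔ M) ⊔ B := by
        apply sup_le
        · apply sup_le
          · exact le_trans hAle (sup_le (le_trans le_sup_left le_sup_left) le_sup_right)
          · exact le_sup_right
        · exact le_trans le_sup_right le_sup_left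
      exact hsub hv
end

section
/- If L ⊆ L' are two discrete subspaces of V (with respect to V⁺), then the quotient L'/L is a finite-dimensional k-vector space. -/
/-- A subspace `L ⊆ V` is *discrete* (w.r.t. `V⁺`) if `L ∩ V⁺` and `V/(L + V⁺)` are
finite-dimensional over `k`. -/
def IsDiscreteSubspace {k V : Type*} [Field k] [AddCommGroup V] [Module k V]
    (Vplus L : Submodule k V) : Prop :=
  FiniteDimensional k ↥(L ⊓ Vplus) ∧ FiniteDimensional k (V ⧸ (L ⊔ Vplus))

/-- If `L ⊆ L'` are discrete subspaces of `V` (w.r.t. `V⁺`), then the quotient `L'/L` is a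
finite-dimensional `k`-vector space. -/
theorem finiteDimensional_quotient_of_discrete {k V : Type*} [Field k] [AddCommGroup V]
    [Module k V] (Vplus L L' : Submodule k V)
    (hL : IsDiscreteSubspace Vplus L) (hL' : IsDiscreteSubspace Vplus L') (hLL' : L ≤ L') :
    FiniteDimensional k (↥L' ⧸ Submodule.comap L'.subtype L) := by
  obtain ⟨-, h2⟩ := hL
  obtain ⟨h1', -⟩ := hL'
  set W : Submodule k L' := Submodule.comap L'.subtype L with hW
  set X : Submodule k L' := Submodule.comap L'.subtype (L' ⊓ Vplus) with hX
  have hXfd : FiniteDimensional k X :=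
    LinearEquiv.finiteDimensional (Submodule.comapSubtypeEquivOfLe inf_le_left).symm
  set m : Submodule k (↥L' ⧸ W) := (W ⊔ X).map W.mkQ with hm
  have hmeq : m = X.map W.mkQ := by
    rw [hm, Submodule.map_sup]
    have : W.map W.mkQ = ⊥ := by
      rw [eq_bot_iff]
      rintro y ⟨x, hx, rfl⟩
      simpa using (Submodule.Quotient.mk_eq_zero W).mpr hx
    rw [this, bot_sup_eq]
  have hmfd : FiniteDimensional k m := by
    rw [hmeq]; exact Module.Finite.map X W.mkQ
  have hker : Submodule.comap L'.subtype (L ⊔ Vplus) ≤ W ⊔ X := by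
    rintro ⟨x, hxL'⟩ hx
    simp only [Submodule.mem_comap, Submodule.coe_subtype] at hx
    obtain ⟨a, ha, b, hb, hab⟩ := Submodule.mem_sup.mp hx
    have haL' : a ∈ L' := hLL' ha
    have hbL' : b ∈ L' := by
      have hbe : b = x - a := by rw [← hab]; abel
      rw [hbe]; exact Submodule.sub_mem _ hxL' haL'
    refine Submodule.mem_sup.mpr ⟨⟨a, haL'⟩, ha, ⟨b, hbL'⟩, ⟨hbL', hb⟩, ?_⟩
    ext; simp [hab]
  have hq : FiniteDimensional k (↥L' ⧸ (W ⊔ X)) := by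
    set f : ↥L' →ₗ[k] V ⧸ (L ⊔ Vplus) := (L ⊔ Vplus).mkQ.comp L'.subtype with hf
    have hle : W ⊔ X ≤ LinearMap.ker f := by
      rw [hf, LinearMap.ker_comp, Submodule.ker_mkQ]
      exact sup_le (Submodule.comap_mono le_sup_left)
        (Submodule.comap_mono (le_trans inf_le_right le_sup_right))
    have hinj : Function.Injective (Submodule.liftQ (W ⊔ X) f hle) := by
      rw [← LinearMap.ker_eq_bot, Submodule.ker_liftQ_eq_bot]
      rw [hf, LinearMap.ker_comp, Submodule.ker_mkQ]
      exact hker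
    exact FiniteDimensional.of_injective _ hinj
  have hqm : FiniteDimensional k ((↥L' ⧸ W) ⧸ m) :=
    LinearEquiv.finiteDimensional
      (Submodule.quotientQuotientEquivQuotient W (W ⊔ X) le_sup_left).symm
  refine Module.rank_lt_aleph0_iff.mp ?_
  rw [← Submodule.rank_quotient_add_rank m]
  exact Cardinal.add_lt_aleph0 (Module.rank_lt_aleph0 k _) (Module.rank_lt_aleph0 k _)
end

section
/- Let L ⊆ L' be discrete subspaces of V (with respect to V⁺) and let M be a subspace with L ⊆ M ⊆ L'. Then M is discrete and its index satisfies i(M) = i(L') − dim_k(L'/M), where for a discrete subspace W the index is i(W) := dim_k(W ∩ V⁺) − dim_k(V/(W + V⁺)). (This is the behaviour of the index of the infinite Grassmannian under the closed immersion j : Gr(L'/L) ↪ Gr(V), j(M̄) = π⁻¹(M̄), evaluated at rational points.) -/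
/-- The index of a (discrete) subspace `W`: `i(W) = dim_k(W ∩ V⁺) − dim_k(V/(W + V⁺))`. -/
noncomputable def grIndex {k V : Type*} [Field k] [AddCommGroup V] [Module k V]
    (Vplus W : Submodule k V) : ℤ :=
  (Module.finrank k ↥(W ⊓ Vplus) : ℤ) - (Module.finrank k (V ⧸ (W ⊔ Vplus)) : ℤ)

section Aux

open Submodule Module

variable {k X : Type*} [Field k] [AddCommGroup X] [Module k X]

/-- If a submodule and the corresponding quotient are finite dimensional, so is the module. -/
lemma aux_fd_of_submodule_quotient (S : Submodule k X) [FiniteDimensional k S]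
    [FiniteDimensional k (X ⧸ S)] : FiniteDimensional k X := by
  refine Module.finite_def.mpr ?_
  apply Submodule.fg_of_fg_map_of_fg_inf_ker S.mkQ
  · rw [Submodule.map_top, Submodule.range_mkQ, ← Module.finite_def]
    infer_instance
  · rw [top_inf_eq, Submodule.ker_mkQ]
    exact Module.Finite.iff_fg.mp ‹_›

/-- `T/(T ∩ S) ≃ (T + S)/S` (as image of `T` in `X/S`). -/
noncomputable def auxMapMkQEquiv (S T : Submodule k X) :
    (↥T ⧸ Submodule.comap T.subtype S) ≃ₗ[k] ↥(T.map S.mkQ) := by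
  have h1 : Submodule.comap T.subtype S = LinearMap.ker (S.mkQ ∘ₗ T.subtype) := by
    rw [LinearMap.ker_comp, Submodule.ker_mkQ]
  have h2 : T.map S.mkQ = LinearMap.range (S.mkQ ∘ₗ T.subtype) := by
    rw [LinearMap.range_comp, Submodule.range_subtype]
  exact (Submodule.quotEquivOfEq _ _ h1) ≪≫ₗ (S.mkQ ∘ₗ T.subtype).quotKerEquivRange ≪≫ₗ
    (LinearEquiv.ofEq _ _ h2.symm)

lemma aux_finrank_quotient_chain (S T : Submodule k X) (h : S ≤ T)
    [FiniteDimensional k (X ⧸ S)] :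
    finrank k (X ⧸ S) = finrank k (X ⧸ T) + finrank k (↥T ⧸ Submodule.comap T.subtype S) := by
  have e := Submodule.quotientQuotientEquivQuotient S T h
  have h3 := Submodule.finrank_quotient_add_finrank (T.map S.mkQ)
  rw [LinearEquiv.finrank_eq e, LinearEquiv.finrank_eq (auxMapMkQEquiv S T).symm] at h3
  omega

end Aux

set_option maxHeartbeats 1000000 in
set_option synthInstance.maxHeartbeats 400000 in
/-- If `L ⊆ M ⊆ L'` with `L`, `L'` discrete (w.r.t. `V⁺`), then `M` is discrete and
`i(M) = i(L') − dim_k(L'/M)`. -/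
theorem isDiscrete_and_index_of_sandwich {k V : Type*} [Field k] [AddCommGroup V] [Module k V]
    (Vplus L L' M : Submodule k V)
    (hL : IsDiscreteSubspace Vplus L) (hL' : IsDiscreteSubspace Vplus L')
    (h1 : L ≤ M) (h2 : M ≤ L') :
    IsDiscreteSubspace Vplus M ∧
      grIndex Vplus M =
        grIndex Vplus L' - (Module.finrank k (↥L' ⧸ Submodule.comap L'.subtype M) : ℤ) := by
  open Submodule Module in
  haveI hLV' : FiniteDimensional k ↥(L' ⊓ Vplus) := hL'.1
  haveI hLq' : FiniteDimensional k (V ⧸ (L' ⊔ Vplus)) := hL'.2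
  haveI hLq : FiniteDimensional k (V ⧸ (L ⊔ Vplus)) := hL.2
  -- M ⊓ V⁺ finite dimensional
  haveI hMV : FiniteDimensional k ↥(M ⊓ Vplus) :=
    Submodule.finiteDimensional_of_le (inf_le_inf_right Vplus h2)
  -- V/(M + V⁺) finite dimensional
  haveI hMq : FiniteDimensional k (V ⧸ (M ⊔ Vplus)) := by
    have hle : L ⊔ Vplus ≤ M ⊔ Vplus := sup_le_sup_right h1 Vplus
    have hsurj : Function.Surjective (Submodule.mapQ (L ⊔ Vplus) (M ⊔ Vplus) LinearMap.id hle) := by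
      intro x
      obtain ⟨y, rfl⟩ := Submodule.mkQ_surjective _ x
      exact ⟨Submodule.Quotient.mk y, by simp [Submodule.mapQ_apply, Submodule.mkQ_apply]⟩
    exact Module.Finite.of_surjective _ hsurj
  refine ⟨⟨hMV, hMq⟩, ?_⟩
  -- Notation inside W := ↥L'
  set m : Submodule k ↥L' := Submodule.comap L'.subtype M with hm
  set p : Submodule k ↥L' := Submodule.comap L'.subtype Vplus with hp
  set K : Submodule k ↥L' := p ⊔ m with hKdef
  have hK : Submodule.comap L'.subtype (M ⊔ Vplus) = K := by
    apply Submodule.map_injective_of_injective (Submodule.injective_subtype L')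
    rw [Submodule.map_sup, Submodule.map_comap_subtype, Submodule.map_comap_subtype,
      Submodule.map_comap_subtype, inf_eq_right.mpr h2, inf_sup_assoc_of_le _ h2,
      sup_comm M Vplus]
  -- p ≃ L' ⊓ V⁺
  have hpEq : p = Submodule.comap L'.subtype (L' ⊓ Vplus) := by
    ext x; simp [hp, x.2]
  have ep : ↥p ≃ₗ[k] ↥(L' ⊓ Vplus) :=
    (LinearEquiv.ofEq _ _ hpEq) ≪≫ₗ Submodule.comapSubtypeEquivOfLe inf_le_left
  haveI : FiniteDimensional k ↥p := Module.Finite.equiv ep.symm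
  -- p ⊓ m ≃ M ⊓ V⁺
  have hpm : p ⊓ m = Submodule.comap L'.subtype (M ⊓ Vplus) := by
    rw [Submodule.comap_inf, inf_comm]
  have epm : ↥(Submodule.comap p.subtype (p ⊓ m)) ≃ₗ[k] ↥(M ⊓ Vplus) :=
    (Submodule.comapSubtypeEquivOfLe inf_le_left) ≪≫ₗ (LinearEquiv.ofEq _ _ hpm) ≪≫ₗ
      Submodule.comapSubtypeEquivOfLe (le_trans inf_le_left h2)
  -- second isomorphism theorem : p / (p ⊓ m) ≃ K / m
  have e2 : (↥p ⧸ Submodule.comap p.subtype (p ⊓ m)) ≃ₗ[k]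
      (↥K ⧸ Submodule.comap K.subtype m) := LinearMap.quotientInfEquivSupQuotient p m
  -- relation A = q + a
  have hA : Module.finrank k ↥(L' ⊓ Vplus) =
      Module.finrank k (↥p ⧸ Submodule.comap p.subtype (p ⊓ m)) +
        Module.finrank k ↥(M ⊓ Vplus) := by
    have h5 : Module.finrank k (↥p ⧸ Submodule.comap p.subtype (p ⊓ m)) +
        Module.finrank k ↥(Submodule.comap p.subtype (p ⊓ m)) = Module.finrank k ↥p :=
      Submodule.finrank_quotient_add_finrank _
    have h6 : Module.finrank k ↥(Submodule.comap p.subtype (p ⊓ m)) =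
        Module.finrank k ↥(M ⊓ Vplus) := LinearEquiv.finrank_eq epm
    have h7 : Module.finrank k ↥p = Module.finrank k ↥(L' ⊓ Vplus) :=
      LinearEquiv.finrank_eq ep
    omega
  -- relation B = b + r
  have hB : Module.finrank k (V ⧸ (M ⊔ Vplus)) =
      Module.finrank k (V ⧸ (L' ⊔ Vplus)) +
        Module.finrank k
          (↥(L' ⊔ Vplus) ⧸ Submodule.comap (L' ⊔ Vplus).subtype (M ⊔ Vplus)) :=
    aux_finrank_quotient_chain _ _ (sup_le_sup_right h2 Vplus)
  -- the map L' → V/(M + V⁺)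
  set f₀ : ↥L' →ₗ[k] V ⧸ (M ⊔ Vplus) := (M ⊔ Vplus).mkQ ∘ₗ L'.subtype with hf₀
  have hker : LinearMap.ker f₀ = K := by
    rw [hf₀, LinearMap.ker_comp, Submodule.ker_mkQ, hK]
  have eWK : (↥L' ⧸ K) ≃ₗ[k] ↥(LinearMap.range f₀) :=
    (Submodule.quotEquivOfEq _ _ hker.symm) ≪≫ₗ f₀.quotKerEquivRange
  have hrange : LinearMap.range f₀ = (L' ⊔ Vplus).map (M ⊔ Vplus).mkQ := by
    rw [hf₀, LinearMap.range_comp, Submodule.range_subtype, Submodule.map_sup]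
    have : Vplus.map (M ⊔ Vplus).mkQ = ⊥ := by
      rw [eq_bot_iff, Submodule.map_le_iff_le_comap, Submodule.comap_bot, Submodule.ker_mkQ]
      exact le_sup_right
    rw [this, sup_bot_eq]
  -- finrank (L'/K) = r
  have hWK : Module.finrank k (↥L' ⧸ K) =
      Module.finrank k
        (↥(L' ⊔ Vplus) ⧸ Submodule.comap (L' ⊔ Vplus).subtype (M ⊔ Vplus)) := by
    have h8 : Module.finrank k (↥L' ⧸ K) = Module.finrank k ↥(LinearMap.range f₀) :=
      LinearEquiv.finrank_eq eWK
    have h9 : Module.finrank k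
          (↥(L' ⊔ Vplus) ⧸ Submodule.comap (L' ⊔ Vplus).subtype (M ⊔ Vplus)) =
        Module.finrank k ↥((L' ⊔ Vplus).map (M ⊔ Vplus).mkQ) :=
      LinearEquiv.finrank_eq (auxMapMkQEquiv (M ⊔ Vplus) (L' ⊔ Vplus))
    rw [h8, h9, ← hrange]
  -- finite dimensionality of L'/m and the chain relation C = r + q
  haveI : FiniteDimensional k ↥(LinearMap.range f₀) := inferInstance
  haveI : FiniteDimensional k (↥L' ⧸ K) := Module.Finite.equiv eWK.symm
  haveI : FiniteDimensional k (↥K ⧸ Submodule.comap K.subtype m) :=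
    Module.Finite.equiv e2
  haveI hfinKm : FiniteDimensional k ↥(K.map m.mkQ) :=
    Module.Finite.equiv (auxMapMkQEquiv m K)
  have hmK : m ≤ K := le_sup_right
  haveI : FiniteDimensional k (↥L' ⧸ m) := by
    haveI : FiniteDimensional k ((↥L' ⧸ m) ⧸ (K.map m.mkQ)) :=
      Module.Finite.equiv (Submodule.quotientQuotientEquivQuotient m K hmK).symm
    exact aux_fd_of_submodule_quotient (K.map m.mkQ)
  have hC : Module.finrank k (↥L' ⧸ m) =
      Module.finrank k (↥L' ⧸ K) +
        Module.finrank k (↥K ⧸ Submodule.comap K.subtype m) :=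
    aux_finrank_quotient_chain m K hmK
  -- assemble
  have hq : Module.finrank k (↥K ⧸ Submodule.comap K.subtype m) =
      Module.finrank k (↥p ⧸ Submodule.comap p.subtype (p ⊓ m)) := by
    have h10 : Module.finrank k (↥p ⧸ Submodule.comap p.subtype (p ⊓ m)) =
        Module.finrank k (↥K ⧸ Submodule.comap K.subtype m) := LinearEquiv.finrank_eq e2
    omega
  simp only [grIndex]
  omega
end

section
/- Let A be a commutative ring and f a unit of the ring A((z)) of formal Laurent series. Then the function Spec A → ℤ sending a point s to v_s(f), the order of the induced nonzero Laurent series f_s ∈ k(s)((z)), is locally constant with respect to the Zariski topology on Spec A. -/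
open HahnSeries

/-- Mapping Hahn series along a ring hom is multiplicative. -/
lemma aux_map_mul {A B : Type*} [CommRing A] [CommRing B] (φ : A →+* B)
    (x y : LaurentSeries A) :
    (x * y).map φ = (x.map φ : LaurentSeries B) * y.map φ := by
  have := HahnSeries.map_mul (Γ := ℤ) (φ : A →ₙ+* B) (x := x) (y := y)
  exact this

lemma aux_map_one {A B : Type*} [CommRing A] [CommRing B] (φ : A →+* B) :
    ((1 : LaurentSeries A).map φ : LaurentSeries B) = 1 := by
  exact HahnSeries.map_one (Γ := ℤ) φ.toMonoidWithZeroHom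

/-- The infimum of indices with coefficient not in a prime ideal equals the order of the
mapped Hahn series over the quotient. -/
lemma aux_sInf_eq_order {A : Type*} [CommRing A] (x : LaurentSeries A) (p : Ideal A)
    [p.IsPrime] (hx : (x.map (Ideal.Quotient.mk p) : LaurentSeries (A ⧸ p)) ≠ 0) :
    sInf {i : ℤ | x.coeff i ∉ p} = (x.map (Ideal.Quotient.mk p)).order := by
  set F : LaurentSeries (A ⧸ p) := x.map (Ideal.Quotient.mk p) with hF
  have hset : {i : ℤ | x.coeff i ∉ p} = {i : ℤ | F.coeff i ≠ 0} := by
    ext i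
    simp [hF, HahnSeries.map_coeff, Ideal.Quotient.eq_zero_iff_mem]
  rw [hset]
  have hmem : F.order ∈ {i : ℤ | F.coeff i ≠ 0} := coeff_order_eq_zero.not.2 hx
  have hlb : ∀ i ∈ {i : ℤ | F.coeff i ≠ 0}, F.order ≤ i := by
    intro i hi
    by_contra h
    exact hi (coeff_eq_zero_of_lt_order (lt_of_not_ge h))
  exact le_antisymm (csInf_le ⟨F.order, hlb⟩ hmem) (le_csInf ⟨F.order, hmem⟩ hlb)

/-- Let `f` be a unit of the ring `A((z))` of formal Laurent series over a commutative ring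
`A`. The function sending a point `s` of `Spec A` to `v_s(f)`, the order of the induced
(nonzero) Laurent series over the residue field `k(s)` — i.e. the least integer `i` such
that the `i`-th coefficient of `f` does not vanish in `k(s)`, equivalently does not belong
to the prime ideal `s` — is locally constant on `Spec A` with its Zariski topology. -/
theorem locallyConstant_order_of_unit (A : Type*) [CommRing A] (f : (LaurentSeries A)ˣ) :
    IsLocallyConstant (fun s : PrimeSpectrum A =>
      sInf {i : ℤ | (f : LaurentSeries A).coeff i ∉ s.asIdeal}) := by
  rw [IsLocallyConstant.iff_exists_open]
  intro s
  set x : LaurentSeries A := (f : LaurentSeries A) with hxdef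
  set y : LaurentSeries A := ((f⁻¹ : (LaurentSeries A)ˣ) : LaurentSeries A) with hydef
  have hxy : x * y = 1 := by
    rw [hxdef, hydef]; exact_mod_cast f.mul_inv
  -- mapped series and their basic properties for any prime t
  have key : ∀ t : PrimeSpectrum A,
      (x.map (Ideal.Quotient.mk t.asIdeal) : LaurentSeries (A ⧸ t.asIdeal)) *
        y.map (Ideal.Quotient.mk t.asIdeal) = 1 := by
    intro t
    rw [← aux_map_mul, hxy, aux_map_one]
  have hXne : ∀ t : PrimeSpectrum A,
      (x.map (Ideal.Quotient.mk t.asIdeal) : LaurentSeries (A ⧸ t.asIdeal)) ≠ 0 :=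
    fun t => left_ne_zero_of_mul_eq_one (key t)
  have hYne : ∀ t : PrimeSpectrum A,
      (y.map (Ideal.Quotient.mk t.asIdeal) : LaurentSeries (A ⧸ t.asIdeal)) ≠ 0 :=
    fun t => right_ne_zero_of_mul_eq_one (key t)
  have horder : ∀ t : PrimeSpectrum A,
      (x.map (Ideal.Quotient.mk t.asIdeal)).order +
        (y.map (Ideal.Quotient.mk t.asIdeal)).order = 0 := by
    intro t
    rw [← order_mul (hXne t) (hYne t), key t, order_one]
  set n : ℤ := (x.map (Ideal.Quotient.mk s.asIdeal)).order with hn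
  set m : ℤ := (y.map (Ideal.Quotient.mk s.asIdeal)).order with hm
  refine ⟨(PrimeSpectrum.basicOpen (x.coeff n) ⊓ PrimeSpectrum.basicOpen (y.coeff m) :
      TopologicalSpace.Opens (PrimeSpectrum A)), ?_, ?_, ?_⟩
  · exact (PrimeSpectrum.basicOpen (x.coeff n) ⊓ PrimeSpectrum.basicOpen (y.coeff m)).isOpen
  · constructor
    · rw [SetLike.mem_coe, PrimeSpectrum.mem_basicOpen]
      intro h
      exact coeff_order_eq_zero.not.2 (hXne s) (by
        rw [HahnSeries.map_coeff, Ideal.Quotient.eq_zero_iff_mem]; exact h)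
    · rw [SetLike.mem_coe, PrimeSpectrum.mem_basicOpen]
      intro h
      exact coeff_order_eq_zero.not.2 (hYne s) (by
        rw [HahnSeries.map_coeff, Ideal.Quotient.eq_zero_iff_mem]; exact h)
  · rintro t ⟨ht1, ht2⟩
    rw [SetLike.mem_coe, PrimeSpectrum.mem_basicOpen] at ht1 ht2
    have hXcoeff : (x.map (Ideal.Quotient.mk t.asIdeal)).coeff n ≠ 0 := by
      rw [HahnSeries.map_coeff, ne_eq, Ideal.Quotient.eq_zero_iff_mem]; exact ht1
    have hYcoeff : (y.map (Ideal.Quotient.mk t.asIdeal)).coeff m ≠ 0 := by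
      rw [HahnSeries.map_coeff, ne_eq, Ideal.Quotient.eq_zero_iff_mem]; exact ht2
    have h1 : (x.map (Ideal.Quotient.mk t.asIdeal)).order ≤ n :=
      order_le_of_coeff_ne_zero hXcoeff
    have h2 : (y.map (Ideal.Quotient.mk t.asIdeal)).order ≤ m :=
      order_le_of_coeff_ne_zero hYcoeff
    have hnm : n + m = 0 := horder s
    have heq : (x.map (Ideal.Quotient.mk t.asIdeal)).order = n := by
      have := horder t
      omega

    rw [aux_sInf_eq_order x s.asIdeal (hXne s), aux_sInf_eq_order x t.asIdeal (hXne t),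
      heq, ← hn]
end

section
/- Let A be a nontrivial commutative ring whose nilradical is a prime ideal (equivalently, Spec A is irreducible). An element f ∈ A((z)) is a unit if and only if there exists an integer n such that the coefficient a_n of z^n in f is a unit of A and the coefficients a_i are nilpotent for all i < n; in that case v_s(f) = n for every point s of Spec A. -/
open HahnSeries

/-- Let `A` be a nontrivial commutative ring whose nilradical is prime (i.e. `Spec A` is
irreducible). A Laurent series `f ∈ A((z))` is a unit if and only if there is an integer `n`
such that the coefficient of `z^n` is a unit of `A` and all coefficients of `z^i` for `i < n`
are nilpotent; moreover for such an `n` the order `v_s(f)` of the image of `f` in `k(s)((z))`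
— i.e. the least `i` whose coefficient does not lie in the prime ideal `s` — equals `n` at
every point `s` of `Spec A`. -/
theorem isUnit_laurentSeries_iff_of_irreducible (A : Type*) [CommRing A] [Nontrivial A]
    (hnil : (nilradical A).IsPrime) (f : LaurentSeries A) :
    (IsUnit f ↔ ∃ n : ℤ, IsUnit (f.coeff n) ∧ ∀ i < n, IsNilpotent (f.coeff i)) ∧
    (∀ n : ℤ, IsUnit (f.coeff n) → (∀ i < n, IsNilpotent (f.coeff i)) →
      ∀ s : PrimeSpectrum A, sInf {i : ℤ | f.coeff i ∉ s.asIdeal} = n) := by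
  constructor
  · constructor
    · -- forward direction
      intro hf
      obtain ⟨g, hfg⟩ := hf.exists_right_inv
      set N := nilradical A with hN
      -- the sets of "non-nilpotent coefficient" indices are nonempty
      have key : ∀ x y : LaurentSeries A, x * y = 1 → {i : ℤ | x.coeff i ∉ N}.Nonempty := by
        intro x y hxy
        by_contra hcon
        simp only [Set.Nonempty, Set.mem_setOf_eq, not_exists, not_not] at hcon
        have h1 : (1 : LaurentSeries A).coeff 0 ∈ N := by
          rw [← hxy, coeff_mul]
          exact Ideal.sum_mem _ fun ij _ => Ideal.mul_mem_right _ _ (hcon ij.1)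
        rw [coeff_one, if_pos rfl] at h1
        exact hnil.ne_top ((Ideal.eq_top_iff_one _).2 h1)
      have bdd : ∀ x : LaurentSeries A, BddBelow {i : ℤ | x.coeff i ∉ N} := by
        intro x
        exact ⟨x.order, fun i hi =>
          order_le_of_coeff_ne_zero (fun h0 => hi (h0 ▸ N.zero_mem))⟩
      set n := sInf {i : ℤ | f.coeff i ∉ N} with hn
      set m := sInf {i : ℤ | g.coeff i ∉ N} with hm
      have hnmem : f.coeff n ∉ N := Int.csInf_mem (key f g hfg) (bdd f)
      have hmmem : g.coeff m ∉ N := Int.csInf_mem (key g f (by rwa [mul_comm])) (bdd g)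
      have hflt : ∀ i < n, f.coeff i ∈ N := by
        intro i hi
        by_contra hmem
        exact absurd (csInf_le (bdd f) hmem) (not_le.2 hi)
      have hglt : ∀ i < m, g.coeff i ∈ N := by
        intro i hi
        by_contra hmem
        exact absurd (csInf_le (bdd g) hmem) (not_le.2 hi)
      have hmemad : ((n, m) : ℤ × ℤ) ∈
          Finset.addAntidiagonal f.isPWO_support g.isPWO_support (n + m) := by
        rw [Finset.addAntidiagonal, Finset.mem_addAntidiagonal]
        exact ⟨(f.mem_support n).2 fun h0 => hnmem (h0 ▸ N.zero_mem),
          (g.mem_support m).2 fun h0 => hmmem (h0 ▸ N.zero_mem), rfl⟩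
      have hsum : (f * g).coeff (n + m) = f.coeff n * g.coeff m +
          ∑ ij ∈ (Finset.addAntidiagonal f.isPWO_support g.isPWO_support (n + m)).erase (n, m),
            f.coeff ij.1 * g.coeff ij.2 := by
        rw [coeff_mul]; exact (Finset.add_sum_erase _ _ hmemad).symm
      have hrest : (∑ ij ∈ (Finset.addAntidiagonal f.isPWO_support g.isPWO_support
          (n + m)).erase (n, m), f.coeff ij.1 * g.coeff ij.2) ∈ N := by
        refine Ideal.sum_mem _ fun ij hij => ?_
        obtain ⟨hne, hmemij⟩ := Finset.mem_erase.1 hij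
        rw [Finset.addAntidiagonal, Finset.mem_addAntidiagonal] at hmemij
        rcases lt_trichotomy ij.1 n with h1 | h1 | h1
        · exact Ideal.mul_mem_right _ _ (hflt _ h1)
        · exfalso
          apply hne
          have : ij.2 = m := by omega
          exact Prod.ext h1 this
        · exact Ideal.mul_mem_left _ _ (hglt _ (by omega))
      rw [hfg, coeff_one] at hsum
      by_cases hnm : n + m = 0
      · rw [if_pos hnm] at hsum
        have h1 : f.coeff n * g.coeff m = 1 - ∑ ij ∈ (Finset.addAntidiagonal f.isPWO_support
            g.isPWO_support (n + m)).erase (n, m), f.coeff ij.1 * g.coeff ij.2 := by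
          rw [hsum]; ring
        have hu : IsUnit (f.coeff n * g.coeff m) := by
          rw [h1]
          exact IsNilpotent.isUnit_one_sub (mem_nilradical.1 hrest)
        exact ⟨n, isUnit_of_mul_isUnit_left hu,
          fun i hi => mem_nilradical.1 (hflt i hi)⟩
      · exfalso
        rw [if_neg hnm] at hsum
        have : f.coeff n * g.coeff m ∈ N := by
          have h1 : f.coeff n * g.coeff m = -(∑ ij ∈ (Finset.addAntidiagonal f.isPWO_support
              g.isPWO_support (n + m)).erase (n, m), f.coeff ij.1 * g.coeff ij.2) := by
            rw [eq_neg_iff_add_eq_zero, hsum]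
          rw [h1]
          exact N.neg_mem hrest
        rcases hnil.mem_or_mem this with h | h
        · exact hnmem h
        · exact hmmem h
    · -- reverse direction
      rintro ⟨n, hu, hnl⟩
      have hfn0 : f.coeff n ≠ 0 := by
        intro h0
        rw [h0] at hu
        exact not_isUnit_zero hu
      -- the "lower part" of f
      set S : Set ℤ := {i | i < n ∧ f.coeff i ≠ 0} with hS
      have hSfin : S.Finite :=
        (Set.finite_Ico f.order n).subset fun i hi =>
          ⟨order_le_of_coeff_ne_zero hi.2, hi.1⟩
      set h : LaurentSeries A := ∑ i ∈ hSfin.toFinset, single i (f.coeff i) with hhdef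
      have hcoeff : ∀ i : ℤ, h.coeff i = if i ∈ hSfin.toFinset then f.coeff i else 0 := by
        intro i
        have h1 : h.coeff i = ∑ j ∈ hSfin.toFinset, (single j (f.coeff j)).coeff i :=
          map_sum (coeff.addMonoidHom i) _ _
        rw [h1]
        simp only [coeff_single]
        exact (Finset.sum_congr rfl fun j _ => by convert rfl).trans
          (Finset.sum_ite_eq hSfin.toFinset i (fun j => f.coeff j))
      have hhlt : ∀ i : ℤ, n ≤ i → h.coeff i = 0 := by
        intro i hi
        rw [hcoeff, if_neg]
        intro hmem
        rw [Set.Finite.mem_toFinset] at hmem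
        exact absurd hi (not_le.2 hmem.1)
      have hnilh : IsNilpotent h := by
        refine isNilpotent_sum fun i hi => ?_
        rw [Set.Finite.mem_toFinset] at hi
        obtain ⟨k, hk⟩ := hnl i hi.1
        exact ⟨k, by rw [single_pow, hk, single_eq_zero]⟩
      set g : LaurentSeries A := f - h with hgdef
      have hglt : ∀ i < n, g.coeff i = 0 := by
        intro i hi
        rw [hgdef, coeff_sub, hcoeff]
        by_cases hc : f.coeff i = 0
        · rw [if_neg, hc, sub_zero]
          rw [Set.Finite.mem_toFinset]
          exact fun hmem => hmem.2 hc
        · rw [if_pos, sub_self]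
          rw [Set.Finite.mem_toFinset]
          exact ⟨hi, hc⟩
      have hgn : g.coeff n = f.coeff n := by
        rw [hgdef, coeff_sub, hhlt n le_rfl, sub_zero]
      have hgne : g ≠ 0 := by
        intro h0
        apply hfn0
        rw [← hgn, h0, coeff_zero]
      have horder : g.order = n := by
        refine le_antisymm (order_le_of_coeff_ne_zero (hgn ▸ hfn0)) ?_
        by_contra hlt'
        exact (coeff_order_eq_zero.not.2 hgne) (hglt _ (not_le.1 hlt'))
      have hgunit : IsUnit g := by
        rw [← LaurentSeries.single_order_mul_powerSeriesPart g]
        refine IsUnit.mul ?_ ?_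
        · exact IsUnit.of_mul_eq_one (single (-g.order) 1)
            (by rw [single_mul_single, add_neg_cancel, one_mul, single_zero_one])
        · refine IsUnit.map (ofPowerSeries ℤ A) ?_
          rw [PowerSeries.isUnit_iff_constantCoeff, ← PowerSeries.coeff_zero_eq_constantCoeff_apply,
            LaurentSeries.powerSeriesPart_coeff, horder]
          simpa [hgn] using hu
      have : f = g + h := by rw [hgdef, sub_add_cancel]
      rw [this]
      exact hnilh.isUnit_add_left_of_commute hgunit (Commute.all _ _)
  · -- the order at every point
    intro n hu hnl s
    have hmem : n ∈ {i : ℤ | f.coeff i ∉ s.asIdeal} := by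
      intro hin
      exact s.2.ne_top (Ideal.eq_top_of_isUnit_mem _ hin hu)
    have hlb : ∀ i ∈ {i : ℤ | f.coeff i ∉ s.asIdeal}, n ≤ i := by
      intro i hi
      by_contra hlt
      obtain ⟨k, hk⟩ := hnl i (not_le.1 hlt)
      exact hi (s.2.mem_of_pow_mem k (by rw [hk]; exact s.asIdeal.zero_mem))
    exact le_antisymm (csInf_le ⟨n, hlb⟩ hmem) (le_csInf ⟨n, hmem⟩ hlb)
end

section
/- Let A be a commutative ring and f = 1 + b_1 z⁻¹ + … + b_m z⁻ᵐ ∈ A((z)) with all b_i nilpotent. Then there exists a unique finitely supported sequence (a_i)_{i ≥ 1} of nilpotent elements of A such that f = Π_{i ≥ 1} (1 − a_i z⁻ⁱ) (a finite product). (This says that the 'exponential' map of the formal group Γ₋ in positive characteristic, (a_i) ↦ Π(1 − a_i z⁻ⁱ), is a bijection onto Γ₋(A).) -/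
open Polynomial Finset

section PolyPart

variable {A : Type*} [CommRing A]

/-- factors with exponent `> k` don't affect coefficients up to `k`. -/
private lemma gmf_high (c : ℕ → A) (k : ℕ) (s : Finset ℕ) (hs : ∀ i ∈ s, k < i) :
    ∃ r, ∏ i ∈ s, (1 - C (c i) * X ^ i) = 1 + X ^ (k + 1) * r := by
  classical
  induction s using Finset.induction with
  | empty => exact ⟨0, by simp⟩
  | @insert j s hjs ih =>
    obtain ⟨r, hr⟩ := ih fun i hi => hs i (Finset.mem_insert_of_mem hi)
    have hjk : k < j := hs j (Finset.mem_insert_self j s)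
    refine ⟨r - C (c j) * X ^ (j - (k + 1)) - C (c j) * X ^ j * r, ?_⟩
    rw [Finset.prod_insert hjs, hr]
    have hX : (X : A[X]) ^ j = X ^ (k + 1) * X ^ (j - (k + 1)) := by
      rw [← pow_add]; congr 1; omega
    calc (1 - C (c j) * X ^ j) * (1 + X ^ (k + 1) * r)
        = 1 + X ^ (k + 1) * r - C (c j) * X ^ j - C (c j) * X ^ j * (X ^ (k+1) * r) := by ring
      _ = 1 + X ^ (k + 1) * (r - C (c j) * X ^ (j - (k + 1)) - C (c j) * X ^ j * r) := by
          rw [hX]; ring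

private lemma gmf_trunc (c : ℕ → A) (k : ℕ) (s : Finset ℕ) :
    (∏ i ∈ s, (1 - C (c i) * X ^ i)).coeff k
      = (∏ i ∈ s.filter (· ≤ k), (1 - C (c i) * X ^ i)).coeff k := by
  classical
  rw [← Finset.prod_filter_mul_prod_filter_not s (· ≤ k)]
  obtain ⟨r, hr⟩ := gmf_high c k (s.filter fun i => ¬ i ≤ k)
    (fun i hi => by simpa using (Finset.mem_filter.mp hi).2)
  rw [hr, mul_add, mul_one, coeff_add]
  have h2 : (∏ i ∈ s.filter (· ≤ k), (1 - C (c i) * X ^ i)) * (X ^ (k + 1) * r)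
      = ((∏ i ∈ s.filter (· ≤ k), (1 - C (c i) * X ^ i)) * r) * X ^ (k + 1) := by ring
  rw [h2, coeff_mul_X_pow', if_neg (by omega), add_zero]

private lemma gmf_const (c : ℕ → A) (hc0 : c 0 = 0) (n : ℕ) :
    (∏ i ∈ Finset.range n, (1 - C (c i) * X ^ i)).coeff 0 = 1 := by
  induction n with
  | zero => simp
  | succ n ih =>
    rw [Finset.prod_range_succ, mul_coeff_zero, ih, one_mul]
    rcases Nat.eq_zero_or_pos n with h | h
    · subst h; simp [hc0]
    · simp [coeff_X_pow, h.ne]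

private lemma gmf_step (c : ℕ → A) (hc0 : c 0 = 0) (n : ℕ) :
    (∏ i ∈ Finset.range (n + 2), (1 - C (c i) * X ^ i)).coeff (n + 1)
      = (∏ i ∈ Finset.range (n + 1), (1 - C (c i) * X ^ i)).coeff (n + 1) - c (n + 1) := by
  rw [Finset.prod_range_succ, mul_sub, mul_one, coeff_sub]
  congr 1
  have h2 : (∏ i ∈ Finset.range (n + 1), (1 - C (c i) * X ^ i)) * (C (c (n + 1)) * X ^ (n + 1))
      = ((∏ i ∈ Finset.range (n + 1), (1 - C (c i) * X ^ i)) * C (c (n + 1))) * X ^ (n + 1) := by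
    ring
  rw [h2, coeff_mul_X_pow', if_pos le_rfl, Nat.sub_self, coeff_mul_C, gmf_const c hc0, one_mul]

/-- products over the support of a finsupp vs over an initial range -/
private lemma gmf_supp_coeff (w : ℕ →₀ A) (hw0 : w 0 = 0) (k : ℕ) :
    (∏ i ∈ w.support, (1 - C (w i) * X ^ i)).coeff k
      = (∏ i ∈ Finset.range (k + 1), (1 - C (w i) * X ^ i)).coeff k := by
  classical
  rw [gmf_trunc, gmf_trunc (w : ℕ → A) k (Finset.range (k + 1))]
  congr 1
  apply Finset.prod_subset
  · intro i hi
    rcases Finset.mem_filter.mp hi with ⟨_, h2⟩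
    exact Finset.mem_filter.mpr ⟨Finset.mem_range.mpr (by omega), h2⟩
  · intro i hi hni
    rcases Finset.mem_filter.mp hi with ⟨h1, hk⟩
    have : i ∉ w.support := fun hs => hni (Finset.mem_filter.mpr ⟨hs, hk⟩)
    rw [Finsupp.notMem_support_iff.mp this]
    simp

/-- Uniqueness of the factorization at the polynomial level. -/
private lemma gmf_poly_unique (u v : ℕ →₀ A) (hu0 : u 0 = 0) (hv0 : v 0 = 0)
    (h : ∏ i ∈ u.support, (1 - C (u i) * X ^ i) = ∏ i ∈ v.support, (1 - C (v i) * X ^ i)) :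
    u = v := by
  classical
  have key : ∀ n, u n = v n := by
    intro n
    induction n using Nat.strong_induction_on with
    | _ n ih =>
      match n with
      | 0 => rw [hu0, hv0]
      | (n + 1) =>
        have hc := congrArg (fun q => Polynomial.coeff q (n + 1)) h
        rw [gmf_supp_coeff u hu0, gmf_supp_coeff v hv0, gmf_step (u : ℕ → A) hu0,
          gmf_step (v : ℕ → A) hv0] at hc
        have hprod : (∏ i ∈ Finset.range (n + 1), (1 - C (u i) * X ^ i))
            = ∏ i ∈ Finset.range (n + 1), (1 - C (v i) * X ^ i) := by
          apply Finset.prod_congr rfl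
          intro i hi
          rw [ih i (by simpa using Finset.mem_range.mp hi)]
        rw [hprod] at hc
        have h2 : - u (n+1) = - v (n+1) := by
          rw [sub_eq_add_neg, sub_eq_add_neg] at hc
          exact add_left_cancel hc
        simpa using h2
  exact Finsupp.ext key

end PolyPart

section Exist

variable {A : Type*} [CommRing A]

private noncomputable def gmfAux (p : A[X]) : ℕ → (ℕ → A)
  | 0 => fun _ => 0
  | n + 1 => fun k =>
      if k = n + 1 then
        (∏ i ∈ Finset.range (n + 1), (1 - C (gmfAux p n i) * X ^ i)).coeff (n + 1)
          - p.coeff (n + 1)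
      else gmfAux p n k

private noncomputable def gmfSeq (p : A[X]) (n : ℕ) : A := gmfAux p n n

private lemma gmfAux_stable (p : A[X]) : ∀ n k, k ≤ n → gmfAux p n k = gmfSeq p k := by
  intro n
  induction n with
  | zero => intro k hk; interval_cases k; rfl
  | succ n ih =>
    intro k hk
    rcases Nat.lt_or_ge k (n + 1) with h | h
    · show (if k = n + 1 then _ else gmfAux p n k) = _
      rw [if_neg (by omega), ih k (by omega)]
    · have : k = n + 1 := by omega
      subst this; rfl

private lemma gmfSeq_zero (p : A[X]) : gmfSeq p 0 = 0 := rfl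

private lemma gmfSeq_succ (p : A[X]) (n : ℕ) :
    gmfSeq p (n + 1)
      = (∏ i ∈ Finset.range (n + 1), (1 - C (gmfSeq p i) * X ^ i)).coeff (n + 1)
        - p.coeff (n + 1) := by
  show (if n + 1 = n + 1 then _ else _) = _
  rw [if_pos rfl]
  congr 2
  apply Finset.prod_congr rfl
  intro i hi
  rw [gmfAux_stable p n i (by simpa using Nat.lt_succ_iff.mp (Finset.mem_range.mp hi))]

/-- the partial products match `p` in low coefficients -/
private lemma gmfSeq_coeff (p : A[X]) (hp0 : p.coeff 0 = 1) :
    ∀ n k, k < n → (∏ i ∈ Finset.range n, (1 - C (gmfSeq p i) * X ^ i)).coeff k = p.coeff k := by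
  intro n k hk
  -- first truncate to range (k+1)
  have htr : (∏ i ∈ Finset.range n, (1 - C (gmfSeq p i) * X ^ i)).coeff k
      = (∏ i ∈ Finset.range (k + 1), (1 - C (gmfSeq p i) * X ^ i)).coeff k := by
    rw [gmf_trunc, gmf_trunc (gmfSeq p) k (Finset.range (k + 1))]
    congr 1
    congr 1
    ext i
    simp only [Finset.mem_filter, Finset.mem_range]
    omega
  rw [htr]
  match k with
  | 0 => rw [gmf_const (gmfSeq p) (gmfSeq_zero p), hp0]
  | (k + 1) =>
    rw [gmf_step (gmfSeq p) (gmfSeq_zero p) k, gmfSeq_succ p k]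
    ring

private lemma gmf_nilp_factor (a : A) (ha : IsNilpotent a) (i : ℕ) :
    ∀ k, 1 ≤ k → IsNilpotent ((1 - C a * X ^ i).coeff k) := by
  intro k hk
  rw [coeff_sub, coeff_one, if_neg (by omega), coeff_C_mul, coeff_X_pow]
  rcases eq_or_ne k i with h | h
  · rw [if_pos h, mul_one, zero_sub]; exact ha.neg
  · rw [if_neg h, mul_zero, zero_sub, neg_zero]; exact IsNilpotent.zero

private lemma gmf_nilp_prod {ι : Type*} (s : Finset ι) (f : ι → A[X])
    (h : ∀ i ∈ s, ∀ k, 1 ≤ k → IsNilpotent ((f i).coeff k)) :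
    ∀ k, 1 ≤ k → IsNilpotent ((∏ i ∈ s, f i).coeff k) := by
  classical
  refine Finset.prod_induction f (fun q => ∀ k, 1 ≤ k → IsNilpotent (q.coeff k)) ?_ ?_ h
  · intro q r hq hr k hk
    rw [coeff_mul]
    apply isNilpotent_sum
    rintro ⟨i, j⟩ hij
    have hij' : i + j = k := Finset.HasAntidiagonal.mem_antidiagonal.mp hij
    rcases Nat.eq_zero_or_pos i with h0 | h0
    · exact (Commute.all _ _).isNilpotent_mul_left (hr j (by omega))
    · exact (Commute.all _ _).isNilpotent_mul_right (hq i h0)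
  · intro k hk
    rw [coeff_one, if_neg (by omega)]
    exact IsNilpotent.zero

private lemma gmfSeq_nilpotent (p : A[X]) (hpn : ∀ k, 1 ≤ k → IsNilpotent (p.coeff k)) :
    ∀ n, IsNilpotent (gmfSeq p n) := by
  intro n
  induction n using Nat.strong_induction_on with
  | _ n ih =>
    match n with
    | 0 => rw [gmfSeq_zero]; exact IsNilpotent.zero
    | (n + 1) =>
      rw [gmfSeq_succ]
      refine Commute.isNilpotent_sub (Commute.all _ _) ?_ (hpn _ (by omega))
      exact gmf_nilp_prod _ _
        (fun i hi => gmf_nilp_factor _ (ih i (Finset.mem_range.mp hi)) i) _ (by omega)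

end Exist

section Grading

variable {A : Type*} [CommRing A]

private def gmfC (m k : ℕ) : ℕ := (k + m - 1) / m

private lemma gmfC_zero (m : ℕ) (hm : 1 ≤ m) : gmfC m 0 = 0 := by
  unfold gmfC
  exact Nat.div_eq_of_lt (by omega)

private lemma gmfC_le_mul (m : ℕ) (hm : 1 ≤ m) (i : ℕ) : i ≤ m * gmfC m i := by
  have h1 : i + m - 1 < (gmfC m i + 1) * m := by
    rw [← Nat.div_lt_iff_lt_mul (by omega)]
    exact Nat.lt_succ_self _
  rw [Nat.succ_mul] at h1
  rw [Nat.mul_comm]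
  omega

private lemma gmfC_add (m : ℕ) (hm : 1 ≤ m) (i j : ℕ) :
    gmfC m (i + j) ≤ gmfC m i + gmfC m j := by
  have hi := gmfC_le_mul m hm i
  have hj := gmfC_le_mul m hm j
  calc gmfC m (i + j) = (i + j + m - 1) / m := rfl
    _ ≤ (m * (gmfC m i + gmfC m j) + (m - 1)) / m :=
        Nat.div_le_div_right (by rw [Nat.mul_add]; omega)
    _ = gmfC m i + gmfC m j + (m - 1) / m := Nat.mul_add_div (by omega) _ _
    _ = gmfC m i + gmfC m j := by rw [Nat.div_eq_of_lt (by omega), add_zero]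

private lemma gmfC_one (m : ℕ) (hm : 1 ≤ m) (k : ℕ) (h1 : 1 ≤ k) (h2 : k ≤ m) :
    gmfC m k = 1 := by
  exact Nat.div_eq_of_lt_le (by omega) (by omega)

private lemma gmfW_mul (I : Ideal A) (m : ℕ) (hm : 1 ≤ m) (q r : A[X])
    (hq : ∀ k, q.coeff k ∈ I ^ gmfC m k) (hr : ∀ k, r.coeff k ∈ I ^ gmfC m k) :
    ∀ k, (q * r).coeff k ∈ I ^ gmfC m k := by
  intro k
  rw [coeff_mul]
  apply Submodule.sum_mem
  rintro ⟨i, j⟩ hij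
  have hij' : i + j = k := Finset.HasAntidiagonal.mem_antidiagonal.mp hij
  have h1 : q.coeff i * r.coeff j ∈ I ^ gmfC m i * I ^ gmfC m j :=
    Ideal.mul_mem_mul (hq i) (hr j)
  rw [← pow_add] at h1
  exact Ideal.pow_le_pow_right (hij' ▸ gmfC_add m hm i j) h1

private lemma gmfW_one (I : Ideal A) (m : ℕ) (hm : 1 ≤ m) :
    ∀ k, (1 : A[X]).coeff k ∈ I ^ gmfC m k := by
  intro k
  rw [coeff_one]
  rcases eq_or_ne k 0 with h | h
  · subst h; rw [if_pos rfl, gmfC_zero m hm, pow_zero, Ideal.one_eq_top]; trivial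
  · rw [if_neg h]; exact Submodule.zero_mem _

private lemma gmfW_factor (I : Ideal A) (m : ℕ) (hm : 1 ≤ m) (a : A) (i : ℕ)
    (ha : a ∈ I ^ gmfC m i) :
    ∀ k, (1 - C a * X ^ i).coeff k ∈ I ^ gmfC m k := by
  intro k
  rcases eq_or_ne k 0 with h | h
  · subst h; rw [gmfC_zero m hm, pow_zero, Ideal.one_eq_top]; trivial
  · rw [coeff_sub, coeff_one, if_neg h, coeff_C_mul, coeff_X_pow]
    rcases eq_or_ne k i with h2 | h2
    · subst h2
      rw [if_pos rfl, mul_one, zero_sub]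
      exact Submodule.neg_mem _ ha
    · rw [if_neg h2, mul_zero, zero_sub, neg_zero]
      exact Submodule.zero_mem _

private lemma gmfSeq_mem (p : A[X]) (I : Ideal A) (m : ℕ) (hm : 1 ≤ m)
    (hpI : ∀ k, p.coeff k ∈ I ^ gmfC m k) :
    ∀ n, gmfSeq p n ∈ I ^ gmfC m n := by
  intro n
  induction n using Nat.strong_induction_on with
  | _ n ih =>
    match n with
    | 0 => exact Submodule.zero_mem _
    | (n + 1) =>
      rw [gmfSeq_succ]
      refine Submodule.sub_mem _ ?_ (hpI (n + 1))
      refine Finset.prod_induction _ (fun q : A[X] => ∀ k, q.coeff k ∈ I ^ gmfC m k)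
        (gmfW_mul I m hm) (gmfW_one I m hm) ?_ (n + 1)
      intro i hi
      exact gmfW_factor I m hm _ i (ih i (Finset.mem_range.mp hi))

end Grading

section PolyMain

variable {A : Type*} [CommRing A]

/-- The polynomial version of the main theorem. -/
private theorem gmf_poly (p : A[X]) (hp0 : p.coeff 0 = 1)
    (hpn : ∀ k, 1 ≤ k → IsNilpotent (p.coeff k)) :
    ∃! a : ℕ →₀ A, (∀ i, IsNilpotent (a i)) ∧ a 0 = 0 ∧
      p = ∏ i ∈ a.support, (1 - C (a i) * X ^ i) := by
  classical
  set m : ℕ := max p.natDegree 1 with hm_def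
  have hm : 1 ≤ m := le_max_right _ _
  set I : Ideal A := Ideal.span ((Finset.Icc 1 m).image p.coeff : Set A) with hI_def
  have hcoeff_mem : ∀ k, 1 ≤ k → p.coeff k ∈ I := by
    intro k hk
    rcases le_or_gt k m with h | h
    · apply Ideal.subset_span
      simp only [Finset.coe_image, Set.mem_image, Finset.mem_coe, Finset.mem_Icc]
      exact ⟨k, ⟨hk, h⟩, rfl⟩
    · rw [Polynomial.coeff_eq_zero_of_natDegree_lt (by omega)]
      exact Submodule.zero_mem _
  have hpI : ∀ k, p.coeff k ∈ I ^ gmfC m k := by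
    intro k
    rcases Nat.eq_zero_or_pos k with h | h
    · subst h; rw [gmfC_zero m hm, pow_zero, Ideal.one_eq_top]; trivial
    rcases le_or_gt k m with h2 | h2
    · rw [gmfC_one m hm k h h2, pow_one]; exact hcoeff_mem k h
    · rw [Polynomial.coeff_eq_zero_of_natDegree_lt (by omega)]
      exact Submodule.zero_mem _
  -- I is nilpotent
  obtain ⟨N, hN⟩ : ∃ N, I ^ N ≤ ⊥ := by
    apply Ideal.exists_pow_le_of_le_radical_of_fg
    · rw [hI_def, Ideal.span_le]
      intro x hx
      simp only [Finset.coe_image, Set.mem_image, Finset.mem_coe, Finset.mem_Icc] at hx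
      obtain ⟨k, ⟨hk1, _⟩, rfl⟩ := hx
      obtain ⟨n, hn⟩ := hpn k hk1
      exact Ideal.mem_radical_iff.mpr ⟨n, by simp [hn]⟩
    · exact Submodule.fg_span (Finset.finite_toSet _)
  -- the sequence vanishes beyond m * N
  have hvanish : ∀ n, m * N ≤ n → gmfSeq p n = 0 := by
    intro n hn
    have h1 : N ≤ gmfC m n := by
      unfold gmfC
      rw [Nat.le_div_iff_mul_le (by omega : 0 < m), Nat.mul_comm]
      omega
    have h2 := gmfSeq_mem p I m hm hpI n
    have h3 : I ^ gmfC m n ≤ ⊥ := le_trans (Ideal.pow_le_pow_right h1) hN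
    simpa using h3 h2
  set a : ℕ →₀ A := Finsupp.onFinset (Finset.range (m * N)) (gmfSeq p)
    (fun n hn => Finset.mem_range.mpr (by
      by_contra h
      exact hn (hvanish n (by omega)))) with ha_def
  have ha_apply : ∀ n, a n = gmfSeq p n := fun n => rfl
  have hprod_eq : ∀ M, m * N ≤ M →
      (∏ i ∈ a.support, (1 - C (a i) * X ^ i)) =
        ∏ i ∈ Finset.range M, (1 - C (gmfSeq p i) * X ^ i) := by
    intro M hM
    refine Finset.prod_subset ?_ ?_
    · intro i hi
      have := Finsupp.mem_support_iff.mp hi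
      rw [ha_apply] at this
      have : i < m * N := by
        by_contra h
        exact this (hvanish i (by omega))
      exact Finset.mem_range.mpr (by omega)
    · intro i _ hi
      rw [Finsupp.notMem_support_iff.mp hi]
      simp
  have hp_eq : p = ∏ i ∈ a.support, (1 - C (a i) * X ^ i) := by
    ext k
    rw [show (∏ i ∈ a.support, (1 - C (a i) * X ^ i)) =
        ∏ i ∈ Finset.range (max (m * N) (k + 1)), (1 - C (gmfSeq p i) * X ^ i) from
      hprod_eq _ (le_max_left _ _)]
    rw [gmfSeq_coeff p hp0 _ k (by omega)]
  refine ⟨a, ⟨fun i => ?_, ?_, hp_eq⟩, ?_⟩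
  · rw [ha_apply]; exact gmfSeq_nilpotent p hpn i
  · rw [ha_apply, gmfSeq_zero]
  · intro v ⟨hv1, hv2, hv3⟩
    refine gmf_poly_unique v a hv2 ?_ ?_
    · rw [ha_apply, gmfSeq_zero]
    · rw [← hv3, ← hp_eq]

end PolyMain

section Transfer

variable {A : Type*} [CommRing A]

private noncomputable def gmfPhi (A : Type*) [CommRing A] : A[X] →+* LaurentSeries A :=
  eval₂RingHom (HahnSeries.C : A →+* HahnSeries ℤ A) (HahnSeries.single (-1 : ℤ) 1)

private lemma gmfPhi_monomial (a : A) (i : ℕ) :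
    gmfPhi A (C a * X ^ i) = HahnSeries.single (-(i : ℤ)) a := by
  have h2 : i • (-1 : ℤ) = -(i : ℤ) := by
    rw [nsmul_eq_mul]; ring
  show eval₂ _ _ (C a * X ^ i) = _
  rw [eval₂_mul, eval₂_C, eval₂_X_pow, HahnSeries.single_pow, h2, one_pow,
    HahnSeries.C_apply, HahnSeries.single_mul_single, zero_add, mul_one]

private lemma gmfPhi_coeff (p : A[X]) (n : ℕ) :
    ((gmfPhi A p : LaurentSeries A)).coeff (-(n : ℤ)) = p.coeff n := by
  classical
  conv_lhs => rw [p.as_sum_support]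
  rw [map_sum]
  have h1 : ∀ i ∈ p.support, gmfPhi A (monomial i (p.coeff i))
      = HahnSeries.single (-(i : ℤ)) (p.coeff i) := by
    intro i _
    rw [← C_mul_X_pow_eq_monomial, gmfPhi_monomial]
  rw [Finset.sum_congr rfl h1]
  have h2 : ∀ i ∈ p.support,
      (HahnSeries.single (-(i : ℤ)) (p.coeff i)).coeff (-(n : ℤ))
        = if i = n then p.coeff i else 0 := by
    intro i _
    rcases eq_or_ne i n with h | h
    · subst h; rw [HahnSeries.coeff_single_same, if_pos rfl]
    · rw [HahnSeries.coeff_single_of_ne (by omega : (-(n : ℤ)) ≠ (-(i : ℤ))), if_neg h]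
  calc (∑ i ∈ p.support, HahnSeries.single (-(i : ℤ)) (p.coeff i)).coeff (-(n : ℤ))
      = ∑ i ∈ p.support,
          (HahnSeries.single (-(i : ℤ)) (p.coeff i)).coeff (-(n : ℤ)) :=
        map_sum (HahnSeries.coeff.addMonoidHom (-(n : ℤ))) _ _
    _ = ∑ i ∈ p.support, if i = n then p.coeff i else 0 := Finset.sum_congr rfl h2
    _ = if n ∈ p.support then p.coeff n else 0 := Finset.sum_ite_eq' p.support n p.coeff
    _ = p.coeff n := by
        split_ifs with h
        · rfl
        · exact (Polynomial.notMem_support_iff.mp h).symm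

end Transfer

private lemma gmfPhi_injective {A : Type*} [CommRing A] : Function.Injective (gmfPhi A) := by
  intro p q h
  ext n
  rw [← gmfPhi_coeff p n, ← gmfPhi_coeff q n, h]

/-- Let `A` be a commutative ring and `f = 1 + b_1 z⁻¹ + ⋯ + b_m z⁻ᵐ ∈ A((z))` with all
`b_i` nilpotent. Then there is a unique finitely supported sequence `(a_i)_{i ≥ 1}` of
nilpotent elements of `A` such that `f = Π_{i ≥ 1} (1 − a_i z⁻ⁱ)` (a finite product): the
exponential map of `Γ₋` in positive characteristic is bijective onto `Γ₋(A)`. -/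
theorem gammaMinus_unique_factorization (A : Type*) [CommRing A]
    (m : ℕ) (b : ℕ → A) (hb : ∀ i, IsNilpotent (b i))
    (f : LaurentSeries A)
    (hf : f = 1 + ∑ i ∈ Finset.Icc 1 m, HahnSeries.single (-(i : ℤ)) (b i)) :
    ∃! a : ℕ →₀ A, (∀ i, IsNilpotent (a i)) ∧ a 0 = 0 ∧
      f = ∏ i ∈ a.support, (1 - HahnSeries.single (-(i : ℤ)) (a i)) := by
  classical
  set p : A[X] := 1 + ∑ i ∈ Finset.Icc 1 m, C (b i) * X ^ i with hp_def
  have hterm : ∀ k i, (C (b i) * X ^ i).coeff k = if i = k then b i else 0 := by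
    intro k i
    rw [coeff_C_mul, coeff_X_pow]
    rcases eq_or_ne i k with h | h
    · subst h; simp
    · rw [if_neg (Ne.symm h), if_neg h, mul_zero]
  have hsum : ∀ k, (∑ i ∈ Finset.Icc 1 m, C (b i) * X ^ i).coeff k
      = if k ∈ Finset.Icc 1 m then b k else 0 := by
    intro k
    rw [finset_sum_coeff, Finset.sum_congr rfl (fun i _ => hterm k i),
      Finset.sum_ite_eq' _ k b]
  have hp0 : p.coeff 0 = 1 := by
    rw [hp_def, coeff_add, coeff_one, if_pos rfl, hsum 0,
      if_neg (by simp), add_zero]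
  have hpn : ∀ k, 1 ≤ k → IsNilpotent (p.coeff k) := by
    intro k hk
    rw [hp_def, coeff_add, coeff_one, if_neg (by omega), hsum k, zero_add]
    split_ifs
    · exact hb k
    · exact IsNilpotent.zero
  have hphi : gmfPhi A p = f := by
    rw [hf, hp_def, map_add, map_one, map_sum]
    congr 1
    exact Finset.sum_congr rfl fun i _ => gmfPhi_monomial (b i) i
  obtain ⟨a, ⟨ha1, ha2, ha3⟩, hau⟩ := gmf_poly p hp0 hpn
  have hmapprod : ∀ v : ℕ →₀ A,
      gmfPhi A (∏ i ∈ v.support, (1 - C (v i) * X ^ i))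
        = ∏ i ∈ v.support, (1 - HahnSeries.single (-(i : ℤ)) (v i)) := by
    intro v
    rw [map_prod]
    exact Finset.prod_congr rfl fun i _ => by rw [map_sub, map_one, gmfPhi_monomial]
  refine ⟨a, ⟨ha1, ha2, ?_⟩, ?_⟩
  · rw [← hphi, ha3, hmapprod]
  · rintro v ⟨hv1, hv2, hv3⟩
    apply hau
    refine ⟨hv1, hv2, ?_⟩
    apply gmfPhi_injective
    rw [hphi, hmapprod, ← hv3]
end

section
/- Let A be a commutative ring and f ∈ A[[z]] a power series with constant term 1. Then there exists a unique sequence (a_i)_{i ≥ 1} of elements of A such that f = Π_{i ≥ 1} (1 − a_i z^i), the infinite product converging z-adically; equivalently, for every n ≥ 1, f ≡ Π_{i=1}^{n} (1 − a_i z^i) modulo z^{n+1}. (This says the map (a_i) ↦ Π(1 − a_i z^i), the exponential of Γ₊ in positive characteristic, is a bijection from A^∞ onto Γ₊(A).) -/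
open PowerSeries Finset

private noncomputable def pufStep {A : Type*} [CommRing A] (f : PowerSeries A) :
    ℕ → A × PowerSeries A
  | 0 => (0, 1)
  | n + 1 =>
      let a := (PowerSeries.coeff (n + 1)) (pufStep f n).2 - (PowerSeries.coeff (n + 1)) f
      (a, (pufStep f n).2 * (1 - PowerSeries.C a * PowerSeries.X ^ (n + 1)))

private lemma puf_constCoeff {A : Type*} [CommRing A] (a : ℕ → A) (n : ℕ) :
    PowerSeries.constantCoeff
      (∏ i ∈ Finset.Icc 1 n, (1 - PowerSeries.C (a i) * PowerSeries.X ^ i)) = 1 := by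
  rw [map_prod]
  apply Finset.prod_eq_one
  intro i hi
  have h1 : 1 ≤ i := (Finset.mem_Icc.mp hi).1
  simp [zero_pow (by omega : i ≠ 0)]

private lemma puf_coeff_stable {A : Type*} [CommRing A] (a : ℕ → A) {k n : ℕ} (h : k ≤ n) :
    (PowerSeries.coeff k)
      (∏ i ∈ Finset.Icc 1 n, (1 - PowerSeries.C (a i) * PowerSeries.X ^ i)) =
    (PowerSeries.coeff k)
      (∏ i ∈ Finset.Icc 1 k, (1 - PowerSeries.C (a i) * PowerSeries.X ^ i)) := by
  induction n with
  | zero => rw [Nat.le_zero.mp h]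
  | succ n ih =>
    rcases eq_or_lt_of_le h with rfl | h'
    · rfl
    have hk : k ≤ n := by omega
    rw [Finset.prod_Icc_succ_top (by omega : 1 ≤ n + 1), mul_sub, mul_one, map_sub, ih hk]
    have hz : (PowerSeries.coeff k)
        ((∏ i ∈ Finset.Icc 1 n, (1 - PowerSeries.C (a i) * PowerSeries.X ^ i)) *
          (PowerSeries.C (a (n + 1)) * PowerSeries.X ^ (n + 1))) = 0 := by
      rw [← mul_assoc, PowerSeries.coeff_mul_X_pow', if_neg (by omega)]
    rw [hz, sub_zero]

private lemma puf_coeff_top {A : Type*} [CommRing A] (a : ℕ → A) (n : ℕ) :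
    (PowerSeries.coeff (n + 1))
      (∏ i ∈ Finset.Icc 1 (n + 1), (1 - PowerSeries.C (a i) * PowerSeries.X ^ i)) =
    (PowerSeries.coeff (n + 1))
      (∏ i ∈ Finset.Icc 1 n, (1 - PowerSeries.C (a i) * PowerSeries.X ^ i)) - a (n + 1) := by
  rw [Finset.prod_Icc_succ_top (by omega : 1 ≤ n + 1), mul_sub, mul_one, map_sub]
  congr 1
  rw [← mul_assoc, PowerSeries.coeff_mul_X_pow', if_pos le_rfl, Nat.sub_self]
  have := puf_constCoeff a n
  simp only [PowerSeries.coeff_zero_eq_constantCoeff, map_mul, this,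
    PowerSeries.constantCoeff_C, one_mul]

/-- Let `A` be a commutative ring and `f ∈ A[[z]]` a power series with constant term `1`.
There exists a unique sequence `(a_i)_{i ≥ 1}` of elements of `A` (encoded as `a : ℕ → A`
with `a 0 = 0`) such that `f = Π_{i ≥ 1} (1 − a_i z^i)`, the infinite product converging
`z`-adically: for every `n`, `f ≡ Π_{i=1}^{n} (1 − a_i z^i)` modulo `z^{n+1}`. -/
theorem powerSeries_unique_product_factorization (A : Type*) [CommRing A]
    (f : PowerSeries A) (hf : PowerSeries.constantCoeff f = 1) :
    ∃! a : ℕ → A, a 0 = 0 ∧ ∀ n : ℕ,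
      PowerSeries.trunc (n + 1) f =
        PowerSeries.trunc (n + 1)
          (∏ i ∈ Finset.Icc 1 n, (1 - PowerSeries.C (a i) * (PowerSeries.X : PowerSeries A) ^ i)) := by
  set a : ℕ → A := fun n => (pufStep f n).1 with ha
  have hP : ∀ n, (pufStep f n).2 =
      ∏ i ∈ Finset.Icc 1 n, (1 - PowerSeries.C (a i) * PowerSeries.X ^ i) := by
    intro n
    induction n with
    | zero => simp [pufStep]
    | succ n ih =>
      rw [Finset.prod_Icc_succ_top (by omega : 1 ≤ n + 1), ← ih]
      rfl
  have hstep : ∀ n : ℕ, a (n + 1) =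
      (PowerSeries.coeff (n + 1))
        (∏ i ∈ Finset.Icc 1 n, (1 - PowerSeries.C (a i) * PowerSeries.X ^ i)) -
      (PowerSeries.coeff (n + 1)) f := by
    intro n; rw [← hP n]; rfl
  -- key: coeff k f = coeff k (∏ over Icc 1 k) for the sequence a
  have hkey : ∀ k : ℕ, (PowerSeries.coeff k)
      (∏ i ∈ Finset.Icc 1 k, (1 - PowerSeries.C (a i) * PowerSeries.X ^ i)) =
      (PowerSeries.coeff k) f := by
    intro k
    cases k with
    | zero =>
      simp only [PowerSeries.coeff_zero_eq_constantCoeff, hf, puf_constCoeff]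
    | succ m =>
      rw [puf_coeff_top, hstep m]
      ring
  have hcoeff : ∀ (b : ℕ → A) (n k : ℕ), k ≤ n →
      (PowerSeries.trunc (n + 1) f =
        PowerSeries.trunc (n + 1)
          (∏ i ∈ Finset.Icc 1 n, (1 - PowerSeries.C (b i) * PowerSeries.X ^ i))) →
      (PowerSeries.coeff k) f = (PowerSeries.coeff k)
        (∏ i ∈ Finset.Icc 1 n, (1 - PowerSeries.C (b i) * PowerSeries.X ^ i)) := by
    intro b n k hk h
    have := congrArg (fun p => Polynomial.coeff p k) h
    simpa [PowerSeries.coeff_trunc, Nat.lt_succ_of_le hk] using this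
  refine ⟨a, ⟨rfl, ?_⟩, ?_⟩
  · intro n
    apply Polynomial.ext
    intro k
    rw [PowerSeries.coeff_trunc, PowerSeries.coeff_trunc]
    split_ifs with hkn
    · rw [puf_coeff_stable a (by omega : k ≤ n), hkey k]
    · rfl
  · rintro b ⟨hb0, hb⟩
    funext n
    induction n using Nat.strong_induction_on with
    | _ n ih =>
      cases n with
      | zero => rw [hb0]; rfl
      | succ m =>
        have hprod : (∏ i ∈ Finset.Icc 1 m, (1 - PowerSeries.C (b i) * PowerSeries.X ^ i)) =
            ∏ i ∈ Finset.Icc 1 m, (1 - PowerSeries.C (a i) * PowerSeries.X ^ i) := by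
          apply Finset.prod_congr rfl
          intro i hi
          rw [ih i (by have := (Finset.mem_Icc.mp hi).2; omega)]
        have h1 := hcoeff b (m + 1) (m + 1) le_rfl (hb (m + 1))
        rw [puf_coeff_top b m, hprod] at h1
        rw [hstep m]
        linear_combination h1
end
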